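/- arXiv:2312.08784 — 6 statements merged into one kernel-verified Lean document; each statement's English description precedes it below -/
import Mathlib

section
/- Let α ∈ (1/2,1), σ > 0 and φ(t) = ασ(1+σt)^{-(α+1)}. There exists a constant C > 0 such that for every ζ ∈ (0,1) and every t ≥ 0, the resolvent R_ζ(t) = ∑_{k=1}^∞ ζ^k φ^{*k}(t) satisfies R_ζ(t) ≤ C (1+t)^{α−1}. -/
open MeasureTheory Real Filter Set

/-- Convolution of two functions on `[0,∞)`: `(f * g)(t) = ∫_0^t f(t-s) g(s) ds`. -/
noncomputable def conv (f g : ℝ → ℝ) : ℝ → ℝ := fun t => ∫ s in (0:ℝ)..t, f (t - s) * g s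

/-- Convolution powers: `convPow f k = f^{*(k+1)}`, i.e. `convPow f 0 = f`. -/
noncomputable def convPow (f : ℝ → ℝ) : ℕ → ℝ → ℝ
  | 0 => f
  | (k + 1) => conv f (convPow f k)

lemma meas_rpow_const (c : ℝ) : Measurable fun x : ℝ => x ^ c :=
  measurable_of_continuousOn_compl_singleton 0 fun x hx =>
    (Real.continuousAt_rpow_const x c (Or.inl hx)).continuousWithinAt

lemma conv_measurable {f g : ℝ → ℝ} (hf : Measurable f) (hg : Measurable g) :
    Measurable (conv f g) := by
  have hF : Measurable fun p : ℝ × ℝ => f (p.1 - p.2) * g p.2 :=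
    (hf.comp (measurable_fst.sub measurable_snd)).mul (hg.comp measurable_snd)
  have key : ∀ S : Set (ℝ × ℝ), MeasurableSet S →
      Measurable fun t : ℝ => ∫ s : ℝ, S.indicator (fun p : ℝ × ℝ => f (p.1 - p.2) * g p.2) (t, s) := by
    intro S hS
    exact ((hF.indicator hS).stronglyMeasurable.integral_prod_right').measurable
  have hS1 : MeasurableSet {p : ℝ × ℝ | p.2 ∈ Set.Ioc 0 p.1} := by
    apply MeasurableSet.inter
    · exact measurableSet_lt measurable_const measurable_snd
    · exact measurableSet_le measurable_snd measurable_fst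
  have hS2 : MeasurableSet {p : ℝ × ℝ | p.2 ∈ Set.Ioc p.1 0} := by
    apply MeasurableSet.inter
    · exact measurableSet_lt measurable_fst measurable_snd
    · exact measurableSet_le measurable_snd measurable_const
  have e : conv f g = fun t =>
      (∫ s : ℝ, ({p : ℝ × ℝ | p.2 ∈ Set.Ioc 0 p.1}).indicator (fun p : ℝ × ℝ => f (p.1 - p.2) * g p.2) (t, s))
      - (∫ s : ℝ, ({p : ℝ × ℝ | p.2 ∈ Set.Ioc p.1 0}).indicator (fun p : ℝ × ℝ => f (p.1 - p.2) * g p.2) (t, s)) := by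
    funext t
    have e1 : (fun s : ℝ => ({p : ℝ × ℝ | p.2 ∈ Set.Ioc 0 p.1}).indicator (fun p : ℝ × ℝ => f (p.1 - p.2) * g p.2) (t, s))
        = (Set.Ioc (0:ℝ) t).indicator (fun s => f (t - s) * g s) := by
      funext s
      by_cases hs : s ∈ Set.Ioc (0:ℝ) t
      · rw [Set.indicator_of_mem hs, Set.indicator_of_mem (by exact hs)]
      · rw [Set.indicator_of_notMem hs, Set.indicator_of_notMem (by exact hs)]
    have e2 : (fun s : ℝ => ({p : ℝ × ℝ | p.2 ∈ Set.Ioc p.1 0}).indicator (fun p : ℝ × ℝ => f (p.1 - p.2) * g p.2) (t, s))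
        = (Set.Ioc t (0:ℝ)).indicator (fun s => f (t - s) * g s) := by
      funext s
      by_cases hs : s ∈ Set.Ioc t (0:ℝ)
      · rw [Set.indicator_of_mem hs, Set.indicator_of_mem (by exact hs)]
      · rw [Set.indicator_of_notMem hs, Set.indicator_of_notMem (by exact hs)]
    rw [e1, e2, integral_indicator measurableSet_Ioc, integral_indicator measurableSet_Ioc]
    rfl
  rw [e]
  exact (key _ hS1).sub (key _ hS2)

lemma II_of_bdd {h : ℝ → ℝ} (hm : Measurable h) {t M : ℝ} (ht : 0 ≤ t)
    (hb : ∀ s ∈ Set.Ioc (0:ℝ) t, |h s| ≤ M) : IntervalIntegrable h volume 0 t := by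
  rw [intervalIntegrable_iff_integrableOn_Ioc_of_le ht]
  refine Integrable.mono' (integrable_const M) hm.aestronglyMeasurable.restrict ?_
  filter_upwards [ae_restrict_mem measurableSet_Ioc] with s hs using hb s hs

section
variable {α σ : ℝ} (hα0 : 0 < α) (hα1 : α < 1) (hσ : 0 < σ)
  {φ : ℝ → ℝ} (hφ : ∀ t : ℝ, φ t = α * σ * (1 + σ * t) ^ (-(α + 1)))

include hα0 hα1 hσ hφ

lemma mass_eq {t : ℝ} (ht : 0 ≤ t) :
    ∫ s in (0:ℝ)..t, φ (t - s) = 1 - (1 + σ * t) ^ (-α) := by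
  have hX : ∀ s ∈ Set.uIcc (0:ℝ) t, (0:ℝ) < 1 + σ * (t - s) := by
    intro s hs
    rw [Set.uIcc_of_le ht] at hs
    nlinarith [hs.1, hs.2]
  have hderiv : ∀ s ∈ Set.uIcc (0:ℝ) t,
      HasDerivAt (fun s => (1 + σ * (t - s)) ^ (-α)) (φ (t - s)) s := by
    intro s hs
    have hin : HasDerivAt (fun s : ℝ => 1 + σ * (t - s)) (-σ) s := by
      simpa using (((hasDerivAt_id s).const_sub t).const_mul σ).const_add 1
    have h2 := hin.rpow_const (p := -α) (Or.inl (ne_of_gt (hX s hs)))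
    convert h2 using 1
    rw [hφ, show (-α - 1 : ℝ) = -(α+1) by ring]
    ring
  have hcont : ContinuousOn (fun s => φ (t - s)) (Set.uIcc 0 t) := by
    have : (fun s => φ (t - s)) = fun s => α * σ * (1 + σ * (t - s)) ^ (-(α + 1)) := by
      funext s; rw [hφ]
    rw [this]
    apply ContinuousOn.mul continuousOn_const
    apply ContinuousOn.rpow_const
    · fun_prop
    · intro s hs; exact Or.inl (ne_of_gt (hX s hs))
  have := intervalIntegral.integral_eq_sub_of_hasDerivAt hderiv
    (hcont.intervalIntegrable)
  rw [this]
  norm_num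

lemma conv_u_eq {t : ℝ} (ht : 0 ≤ t) :
    conv φ (fun s => (1 + s) ^ (α - 1)) t
      = σ * ((1 + t) ^ α - (1 + σ * t) ^ (-α)) / (1 + σ + σ * t) := by
  have hD : (0:ℝ) < 1 + σ + σ * t := by nlinarith
  have hX : ∀ s ∈ Set.uIcc (0:ℝ) t, (0:ℝ) < 1 + σ * (t - s) := by
    intro s hs
    rw [Set.uIcc_of_le ht] at hs
    nlinarith [hs.1, hs.2]
  have h1s : ∀ s ∈ Set.uIcc (0:ℝ) t, (0:ℝ) < 1 + s := by
    intro s hs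
    rw [Set.uIcc_of_le ht] at hs
    linarith [hs.1]
  have hderiv : ∀ s ∈ Set.uIcc (0:ℝ) t,
      HasDerivAt (fun s => σ / (1 + σ + σ * t) * ((1 + s) ^ α * (1 + σ * (t - s)) ^ (-α)))
        (φ (t - s) * (1 + s) ^ (α - 1)) s := by
    intro s hs
    have hXs := hX s hs
    have h1 : HasDerivAt (fun s : ℝ => (1 + s) ^ α) (α * (1 + s) ^ (α - 1)) s := by
      have := HasDerivAt.rpow_const (f := fun s : ℝ => 1 + s) (p := α)
        ((hasDerivAt_id s).const_add 1) (Or.inl (ne_of_gt (h1s s hs)))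
      simpa using this
    have hin : HasDerivAt (fun s : ℝ => 1 + σ * (t - s)) (-σ) s := by
      simpa using (((hasDerivAt_id s).const_sub t).const_mul σ).const_add 1
    have h2 := hin.rpow_const (p := -α) (Or.inl (ne_of_gt hXs))
    have h3 := (h1.mul h2).const_mul (σ / (1 + σ + σ * t))
    refine h3.congr_deriv ?_
    rw [hφ]
    have e1 : (1 + σ * (t - s)) ^ (-α) = (1 + σ * (t - s)) ^ (-α - 1) * (1 + σ * (t - s)) := by
      rw [show (-α : ℝ) = -α - 1 + 1 by ring, Real.rpow_add_one (ne_of_gt hXs)]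
      ring_nf
    have e2 : (1 + s) ^ α = (1 + s) ^ (α - 1) * (1 + s) := by
      rw [show (α : ℝ) = α - 1 + 1 by ring, Real.rpow_add_one (ne_of_gt (h1s s hs))]
      ring_nf
    have e3 : (1 + σ * (t - s)) ^ (-(α + 1)) = (1 + σ * (t - s)) ^ (-α - 1) := by
      rw [show (-(α + 1) : ℝ) = -α - 1 by ring]
    rw [e3]
    rw [e1, e2]
    field_simp
    ring
  have hcont : ContinuousOn (fun s => φ (t - s) * (1 + s) ^ (α - 1)) (Set.uIcc 0 t) := by
    have : (fun s => φ (t - s) * (1 + s) ^ (α - 1))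
        = fun s => (α * σ * (1 + σ * (t - s)) ^ (-(α + 1))) * (1 + s) ^ (α - 1) := by
      funext s; rw [hφ]
    rw [this]
    apply ContinuousOn.mul
    · apply ContinuousOn.mul continuousOn_const
      apply ContinuousOn.rpow_const
      · fun_prop
      · intro s hs; exact Or.inl (ne_of_gt (hX s hs))
    · apply ContinuousOn.rpow_const
      · fun_prop
      · intro s hs; exact Or.inl (ne_of_gt (h1s s hs))
  have hint := intervalIntegral.integral_eq_sub_of_hasDerivAt hderiv hcont.intervalIntegrable
  show (∫ s in (0:ℝ)..t, φ (t - s) * (1 + s) ^ (α - 1)) = _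
  rw [hint]
  rw [show t - t = (0:ℝ) by ring]
  norm_num
  field_simp

/-- The key supersolution inequality: `φ + C (φ*u) ≤ C u` with `C = α(1+σ)`. -/
lemma key_ineq {t : ℝ} (ht : 0 ≤ t) :
    φ t + (α * (1 + σ)) * conv φ (fun s => (1 + s) ^ (α - 1)) t
      ≤ (α * (1 + σ)) * (1 + t) ^ (α - 1) := by
  have hD : (0:ℝ) < 1 + σ + σ * t := by nlinarith
  have h1t : (0:ℝ) < 1 + t := by linarith
  have hA : (0:ℝ) < 1 + σ * t := by nlinarith
  rw [conv_u_eq hα0 hα1 hσ hφ ht, hφ]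
  have eP : (1 + t) ^ α = (1 + t) ^ (α - 1) * (1 + t) := by
    rw [show (α : ℝ) = α - 1 + 1 by ring, Real.rpow_add_one (ne_of_gt h1t)]
    ring_nf
  have eR : (1 + σ * t) ^ (-α) = (1 + σ * t) ^ (-(α + 1)) * (1 + σ * t) := by
    rw [show (-α : ℝ) = -(α + 1) + 1 by ring, Real.rpow_add_one (ne_of_gt hA)]
  set Q : ℝ := (1 + t) ^ (α - 1) with hQdef
  set S : ℝ := (1 + σ * t) ^ (-(α + 1)) with hSdef
  have hQ : 0 ≤ Q := Real.rpow_nonneg (by linarith) _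
  have hS : 0 ≤ S := Real.rpow_nonneg (by linarith) _
  rw [eP, eR]
  rw [← sub_nonneg]
  have expand : α * (1 + σ) * Q - (α * σ * S + α * (1 + σ) * (σ * (Q * (1 + t) - S * (1 + σ * t)) / (1 + σ + σ * t)))
      = (α * (1 + σ) * Q + α * σ^3 * t * S) / (1 + σ + σ * t) := by
    field_simp
    ring
  rw [expand]
  apply div_nonneg _ hD.le
  have h1 : 0 ≤ α * (1 + σ) * Q := by positivity
  have h2 : 0 ≤ α * σ^3 * t * S := by positivity
  linarith

end

set_option maxHeartbeats 1000000 in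
theorem uniform_resolvent_bound
    (α σ : ℝ) (hα : α ∈ Set.Ioo (1/2 : ℝ) 1) (hσ : 0 < σ)
    (φ : ℝ → ℝ) (hφ : ∀ t : ℝ, φ t = α * σ * (1 + σ * t) ^ (-(α + 1))) :
    ∃ C : ℝ, 0 < C ∧ ∀ ζ ∈ Set.Ioo (0:ℝ) 1, ∀ t : ℝ, 0 ≤ t →
      (∑' k : ℕ, ζ ^ (k + 1) * convPow φ k t) ≤ C * (1 + t) ^ (α - 1) := by
  have hα0 : (0:ℝ) < α := lt_trans (by norm_num) hα.1
  have hα1 : α < 1 := hα.2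
  set C : ℝ := α * (1 + σ) with hCdef
  have hC : 0 < C := by positivity
  -- basic facts about φ
  have hφm : Measurable φ := by
    have : φ = fun t => α * σ * (1 + σ * t) ^ (-(α + 1)) := funext hφ
    rw [this]
    exact (((meas_rpow_const (-(α+1))).comp ((measurable_id.const_mul σ).const_add 1)).const_mul (α * σ))
  have hφ_nonneg : ∀ t : ℝ, 0 ≤ t → 0 ≤ φ t := by
    intro t ht
    rw [hφ]
    have : (0:ℝ) ≤ 1 + σ * t := by nlinarith
    positivity
  have hφ_le : ∀ t : ℝ, 0 ≤ t → φ t ≤ α * σ := by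
    intro t ht
    rw [hφ]
    have h1 : (1:ℝ) ≤ 1 + σ * t := by nlinarith
    have h2 : (1 + σ * t) ^ (-(α + 1)) ≤ 1 :=
      Real.rpow_le_one_of_one_le_of_nonpos h1 (by linarith)
    exact mul_le_of_le_one_right (by positivity) h2
  -- measurability of convPow
  have hcm : ∀ k : ℕ, Measurable (convPow φ k) := by
    intro k
    induction k with
    | zero => exact hφm
    | succ k ih => exact conv_measurable hφm ih
  -- uniform bounds for convPow
  have hcb : ∀ k : ℕ, ∀ t : ℝ, 0 ≤ t → 0 ≤ convPow φ k t ∧ convPow φ k t ≤ α * σ := by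
    intro k
    induction k with
    | zero => exact fun t ht => ⟨hφ_nonneg t ht, hφ_le t ht⟩
    | succ k ih =>
      intro t ht
      have hnn : ∀ s ∈ Set.Icc (0:ℝ) t, 0 ≤ φ (t - s) * convPow φ k s := by
        intro s hs
        exact mul_nonneg (hφ_nonneg _ (by linarith [hs.2])) ((ih s hs.1).1)
      constructor
      · exact intervalIntegral.integral_nonneg ht hnn
      · show conv φ (convPow φ k) t ≤ α * σ
        have hmφ : Measurable fun s : ℝ => φ (t - s) :=
          hφm.comp (measurable_const.sub measurable_id)
        have hint1 : IntervalIntegrable (fun s => φ (t - s) * convPow φ k s) volume 0 t := by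
          refine II_of_bdd (hmφ.mul (hcm k)) ht (M := (α * σ) * (α * σ)) fun s hs => ?_
          have hs' : s ∈ Set.Icc (0:ℝ) t := ⟨hs.1.le, hs.2⟩
          simp only [Pi.mul_apply]
          rw [abs_of_nonneg (hnn s hs')]
          exact mul_le_mul (hφ_le _ (by linarith [hs'.2])) (ih s hs'.1).2 (ih s hs'.1).1
            (by positivity)
        have hint2 : IntervalIntegrable (fun s => φ (t - s) * (α * σ)) volume 0 t := by
          refine II_of_bdd (hmφ.mul measurable_const) ht (M := (α * σ) * (α * σ)) fun s hs => ?_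
          have h1 : 0 ≤ φ (t - s) := hφ_nonneg _ (by linarith [hs.2])
          simp only [Pi.mul_apply]
          rw [abs_of_nonneg (by positivity)]
          exact mul_le_mul_of_nonneg_right (hφ_le _ (by linarith [hs.2])) (by positivity)
        calc conv φ (convPow φ k) t ≤ ∫ s in (0:ℝ)..t, φ (t - s) * (α * σ) := by
              apply intervalIntegral.integral_mono_on ht hint1 hint2
              intro s hs
              exact mul_le_mul_of_nonneg_left (ih s hs.1).2 (hφ_nonneg _ (by linarith [hs.2]))
          _ = (∫ s in (0:ℝ)..t, φ (t - s)) * (α * σ) := intervalIntegral.integral_mul_const _ _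
          _ = (1 - (1 + σ * t) ^ (-α)) * (α * σ) := by rw [mass_eq hα0 hα1 hσ hφ ht]
          _ ≤ 1 * (α * σ) := by
              apply mul_le_mul_of_nonneg_right _ (by positivity)
              nlinarith [Real.rpow_nonneg (by nlinarith : (0:ℝ) ≤ 1 + σ * t) (-α)]
          _ = α * σ := one_mul _
  -- main induction: partial sums are bounded by C * u
  have hmain : ∀ ζ : ℝ, 0 < ζ → ζ < 1 → ∀ n : ℕ, ∀ t : ℝ, 0 ≤ t →
      (∑ k ∈ Finset.range n, ζ ^ (k + 1) * convPow φ k t) ≤ C * (1 + t) ^ (α - 1) := by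
    intro ζ hζ0 hζ1 n
    induction n with
    | zero =>
      intro t ht
      simp only [Finset.range_zero, Finset.sum_empty]
      have : (0:ℝ) ≤ (1 + t) ^ (α - 1) := Real.rpow_nonneg (by linarith) _
      positivity
    | succ n ih =>
      intro t ht
      rw [Finset.sum_range_succ']
      have hu_le : ∀ s : ℝ, 0 ≤ s → (1 + s) ^ (α - 1) ≤ 1 := fun s hs =>
        Real.rpow_le_one_of_one_le_of_nonpos (by linarith) (by linarith)
      -- each summand as an integral
      have hterm : ∀ k ∈ Finset.range n, ζ ^ (k + 1 + 1) * convPow φ (k + 1) t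
          = ∫ s in (0:ℝ)..t, ζ ^ (k + 2) * (φ (t - s) * convPow φ k s) := by
        intro k _
        rw [intervalIntegral.integral_const_mul]
        rfl
      rw [Finset.sum_congr rfl hterm]
      have hintk : ∀ k ∈ Finset.range n,
          IntervalIntegrable (fun s => ζ ^ (k + 2) * (φ (t - s) * convPow φ k s)) volume 0 t := by
        intro k _
        have hmφ : Measurable fun s : ℝ => φ (t - s) :=
          hφm.comp (measurable_const.sub measurable_id)
        refine II_of_bdd (measurable_const.mul (hmφ.mul (hcm k))) ht
          (M := 1 * ((α * σ) * (α * σ))) fun s hs => ?_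
        have hs0 : (0:ℝ) ≤ s := hs.1.le
        have hts : (0:ℝ) ≤ t - s := by linarith [hs.2]
        simp only [Pi.mul_apply]
        rw [abs_mul, abs_mul]
        have hb1 : |ζ ^ (k + 2)| ≤ 1 := by
          rw [abs_of_nonneg (by positivity)]
          exact pow_le_one₀ hζ0.le hζ1.le
        have hb2 : |φ (t - s)| ≤ α * σ := by
          rw [abs_of_nonneg (hφ_nonneg _ hts)]; exact hφ_le _ hts
        have hb3 : |convPow φ k s| ≤ α * σ := by
          rw [abs_of_nonneg (hcb k s hs0).1]; exact (hcb k s hs0).2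
        have := mul_le_mul hb2 hb3 (abs_nonneg _) (by positivity)
        exact mul_le_mul hb1 this (by positivity) (by norm_num)
      have hintsum : IntervalIntegrable
          (fun s => ∑ k ∈ Finset.range n, ζ ^ (k + 2) * (φ (t - s) * convPow φ k s)) volume 0 t :=
        by
          have h := IntervalIntegrable.sum (μ := volume) (a := (0:ℝ)) (b := t)
            (f := fun k s => ζ ^ (k + 2) * (φ (t - s) * convPow φ k s)) (Finset.range n) hintk
          have e : (∑ x ∈ Finset.range n, fun s => ζ ^ (x + 2) * (φ (t - s) * convPow φ x s))
              = (fun s : ℝ => ∑ k ∈ Finset.range n, ζ ^ (k + 2) * (φ (t - s) * convPow φ k s)) := by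
            funext s
            simp
          rw [e] at h
          exact h
      have hintCu : IntervalIntegrable (fun s => φ (t - s) * (C * (1 + s) ^ (α - 1))) volume 0 t := by
        have hmφ : Measurable fun s : ℝ => φ (t - s) :=
          hφm.comp (measurable_const.sub measurable_id)
        have hmu : Measurable fun s : ℝ => C * (1 + s) ^ (α - 1) :=
          (((meas_rpow_const (α - 1)).comp (measurable_id.const_add 1))).const_mul C
        refine II_of_bdd (hmφ.mul hmu) ht (M := (α * σ) * (C * 1)) fun s hs => ?_
        have hs0 : (0:ℝ) ≤ s := hs.1.le
        have hts : (0:ℝ) ≤ t - s := by linarith [hs.2]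
        have hu0 : (0:ℝ) ≤ (1 + s) ^ (α - 1) := Real.rpow_nonneg (by linarith) _
        simp only [Pi.mul_apply]
        rw [abs_of_nonneg (mul_nonneg (hφ_nonneg _ hts) (mul_nonneg hC.le hu0))]
        apply mul_le_mul (hφ_le _ hts) _ (by positivity) (by positivity)
        exact mul_le_mul_of_nonneg_left (hu_le s hs0) hC.le
      have hle : (∫ s in (0:ℝ)..t, ∑ k ∈ Finset.range n, ζ ^ (k + 2) * (φ (t - s) * convPow φ k s))
          ≤ ∫ s in (0:ℝ)..t, φ (t - s) * (C * (1 + s) ^ (α - 1)) := by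
        apply intervalIntegral.integral_mono_on ht hintsum hintCu
        intro s hs
        have hs0 : (0:ℝ) ≤ s := hs.1
        have hts : (0:ℝ) ≤ t - s := by linarith [hs.2]
        have hsum_eq : (∑ k ∈ Finset.range n, ζ ^ (k + 2) * (φ (t - s) * convPow φ k s))
            = ζ * (φ (t - s) * ∑ k ∈ Finset.range n, ζ ^ (k + 1) * convPow φ k s) := by
          simp only [Finset.mul_sum]
          exact Finset.sum_congr rfl fun k _ => by ring
        rw [hsum_eq]
        have hSnn : 0 ≤ ∑ k ∈ Finset.range n, ζ ^ (k + 1) * convPow φ k s :=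
          Finset.sum_nonneg fun k _ => mul_nonneg (by positivity) (hcb k s hs0).1
        have h1 : φ (t - s) * (∑ k ∈ Finset.range n, ζ ^ (k + 1) * convPow φ k s)
            ≤ φ (t - s) * (C * (1 + s) ^ (α - 1)) :=
          mul_le_mul_of_nonneg_left (ih s hs0) (hφ_nonneg _ hts)
        calc ζ * (φ (t - s) * ∑ k ∈ Finset.range n, ζ ^ (k + 1) * convPow φ k s)
            ≤ 1 * (φ (t - s) * ∑ k ∈ Finset.range n, ζ ^ (k + 1) * convPow φ k s) := by
              apply mul_le_mul_of_nonneg_right hζ1.le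
                (mul_nonneg (hφ_nonneg _ hts) hSnn)
          _ = φ (t - s) * ∑ k ∈ Finset.range n, ζ ^ (k + 1) * convPow φ k s := one_mul _
          _ ≤ _ := h1
      have hCu_eq : (∫ s in (0:ℝ)..t, φ (t - s) * (C * (1 + s) ^ (α - 1)))
          = C * conv φ (fun s => (1 + s) ^ (α - 1)) t := by
        have : (fun s => φ (t - s) * (C * (1 + s) ^ (α - 1)))
            = fun s => C * (φ (t - s) * (1 + s) ^ (α - 1)) := by
          funext s; ring
        rw [this, intervalIntegral.integral_const_mul]
        rfl
      have hζφ : ζ ^ (0 + 1) * convPow φ 0 t ≤ φ t := by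
        show ζ ^ 1 * φ t ≤ φ t
        rw [pow_one]
        nlinarith [hφ_nonneg t ht]
      have hkey := key_ineq hα0 hα1 hσ hφ ht
      calc (∑ k ∈ Finset.range n, ∫ s in (0:ℝ)..t, ζ ^ (k + 2) * (φ (t - s) * convPow φ k s))
            + ζ ^ (0 + 1) * convPow φ 0 t
          = (∫ s in (0:ℝ)..t, ∑ k ∈ Finset.range n, ζ ^ (k + 2) * (φ (t - s) * convPow φ k s))
            + ζ ^ (0 + 1) * convPow φ 0 t := by
            rw [intervalIntegral.integral_finset_sum hintk]
        _ ≤ (∫ s in (0:ℝ)..t, φ (t - s) * (C * (1 + s) ^ (α - 1))) + φ t := add_le_add hle hζφ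
        _ = φ t + C * conv φ (fun s => (1 + s) ^ (α - 1)) t := by rw [hCu_eq]; ring
        _ ≤ C * (1 + t) ^ (α - 1) := hkey
  -- conclude via tsum
  refine ⟨C, hC, ?_⟩
  rintro ζ ⟨hζ0, hζ1⟩ t ht
  apply Real.tsum_le_of_sum_range_le
  · intro k
    exact mul_nonneg (by positivity) (hcb k t ht).1
  · intro n
    exact hmain ζ hζ0 hζ1 n t ht
end

section
/- Let α ∈ (0,1) and γ > 0, and let f^{α,γ}(t) = γ t^{α−1} E_{α,α}(−γ t^α) and R^{α,γ}(t) = γ t^{α−1}/Γ(α) for t > 0. If H is locally integrable on [0,∞), then the function X(t) = H(t) + (R^{α,γ} * H)(t) is the unique locally integrable solution of the linear Volterra equation X(t) = H(t) + (f^{α,γ} * X)(t) for almost every t ≥ 0. -/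
open MeasureTheory Real Filter Set

/-- The Mittag-Leffler function `E_{a,k}(x) = ∑_{m=0}^∞ x^m / Γ(a m + k)`. -/
noncomputable def mittagLeffler (a k x : ℝ) : ℝ := ∑' m : ℕ, x ^ m / Real.Gamma (a * m + k)

/-- The Mittag-Leffler density `f^{a,g}(t) = g t^{a-1} E_{a,a}(-g t^a)`. -/
noncomputable def mlDensity (a g t : ℝ) : ℝ := g * t ^ (a - 1) * mittagLeffler a a (-g * t ^ a)

/-- The resolvent kernel `R^{a,g}(t) = g t^{a-1} / Γ(a)`. -/
noncomputable def mlKernel (a g t : ℝ) : ℝ := g * t ^ (a - 1) / Real.Gamma a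

set_option maxHeartbeats 1000000

/-- Log-convexity consequence: `z Γ(z) ≤ Γ(z+a) (z+a)^(1-a)` for `0 < a ≤ 1`, `0 < z`. -/
lemma Gamma_add_lower {a z : ℝ} (ha : 0 < a) (ha1 : a ≤ 1) (hz : 0 < z) :
    z * Real.Gamma z ≤ Real.Gamma (z + a) * (z + a) ^ (1 - a) := by
  have hza : (0:ℝ) < z + a := by linarith
  have hkey := Real.convexOn_log_Gamma.2 (mem_Ioi.mpr hza)
    (mem_Ioi.mpr (show (0:ℝ) < z + a + 1 by linarith)) ha.le (by linarith : (0:ℝ) ≤ 1 - a)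
    (by ring)
  have hsmul : a • (z + a) + (1 - a) • (z + a + 1) = z + 1 := by
    simp only [smul_eq_mul]; ring
  rw [hsmul] at hkey
  simp only [Function.comp_apply, smul_eq_mul] at hkey
  have h1 : Real.Gamma (z + 1) = z * Real.Gamma z := Real.Gamma_add_one hz.ne'
  have h2 : Real.Gamma (z + a + 1) = (z + a) * Real.Gamma (z + a) := Real.Gamma_add_one hza.ne'
  have hΓz : 0 < Real.Gamma z := Real.Gamma_pos_of_pos hz
  have hΓza : 0 < Real.Gamma (z + a) := Real.Gamma_pos_of_pos hza
  rw [h1, h2] at hkey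
  have hlog : Real.log (z * Real.Gamma z) ≤
      Real.log (Real.Gamma (z + a)) + (1 - a) * Real.log (z + a) := by
    calc Real.log (z * Real.Gamma z)
        ≤ a * Real.log (Real.Gamma (z + a)) + (1 - a) * Real.log ((z + a) * Real.Gamma (z + a)) :=
          hkey
      _ = Real.log (Real.Gamma (z + a)) + (1 - a) * Real.log (z + a) := by
          rw [Real.log_mul hza.ne' hΓza.ne']; ring
  have hpos : 0 < z * Real.Gamma z := mul_pos hz hΓz
  calc z * Real.Gamma z = Real.exp (Real.log (z * Real.Gamma z)) := (Real.exp_log hpos).symm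
    _ ≤ Real.exp (Real.log (Real.Gamma (z + a)) + (1 - a) * Real.log (z + a)) :=
        Real.exp_le_exp.mpr hlog
    _ = Real.Gamma (z + a) * (z + a) ^ (1 - a) := by
        rw [Real.exp_add, Real.exp_log hΓza, Real.rpow_def_of_pos hza, mul_comm (Real.log _)]

/-- Summability of the Mittag-Leffler type series. -/
lemma summable_ml {a κ : ℝ} (ha : 0 < a) (ha1 : a ≤ 1) (hκ : 0 < κ) {y : ℝ} (hy : 0 ≤ y) :
    Summable (fun m : ℕ => y ^ m / Real.Gamma (a * m + κ)) := by
  refine summable_of_ratio_norm_eventually_le (r := 1/2) (by norm_num) ?_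
  have hz : ∀ m : ℕ, (0:ℝ) < a * m + κ := fun m => by positivity
  have htend : Tendsto (fun m : ℕ => a * m + κ) atTop atTop := by
    apply tendsto_atTop_add_const_right
    exact (tendsto_natCast_atTop_atTop (R := ℝ)).const_mul_atTop ha
  have htend2 : Tendsto (fun m : ℕ => (a * m + κ) ^ a) atTop atTop :=
    (tendsto_rpow_atTop ha).comp htend
  filter_upwards [htend.eventually_ge_atTop a, htend2.eventually_ge_atTop (4 * y)] with m h1 h2
  set z := a * m + κ with hz_def
  have hz0 : (0:ℝ) < z := hz m
  have hza : (0:ℝ) < z + a := by linarith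
  have hΓz : 0 < Real.Gamma z := Real.Gamma_pos_of_pos hz0
  have hΓza : 0 < Real.Gamma (z + a) := Real.Gamma_pos_of_pos hza
  have hidx : a * (m + 1 : ℕ) + κ = z + a := by push_cast; ring
  rw [hidx]
  rw [Real.norm_of_nonneg (by positivity), Real.norm_of_nonneg (by positivity)]
  -- key : y * Γ z ≤ 1/2 * Γ (z+a)
  have hkey : y * Real.Gamma z ≤ 1/2 * Real.Gamma (z + a) := by
    have hA : Real.Gamma (z + a) ≥ z * Real.Gamma z * (z + a) ^ (a - 1) := by
      have := Gamma_add_lower ha ha1 hz0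
      have hrw : (z + a) ^ (1 - a) * (z + a) ^ (a - 1) = 1 := by
        rw [← Real.rpow_add hza]; norm_num
      have hp : (0:ℝ) < (z + a) ^ (a - 1) := Real.rpow_pos_of_pos hza _
      calc Real.Gamma (z + a) = Real.Gamma (z + a) * ((z + a) ^ (1 - a) * (z + a) ^ (a - 1)) := by
            rw [hrw, mul_one]
        _ = (Real.Gamma (z + a) * (z + a) ^ (1 - a)) * (z + a) ^ (a - 1) := by ring
        _ ≥ z * Real.Gamma z * (z + a) ^ (a - 1) := by
            apply mul_le_mul_of_nonneg_right this hp.le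
    have hB : z * (z + a) ^ (a - 1) ≥ 1/2 * z ^ a := by
      have h2z : z + a ≤ 2 * z := by linarith
      have hr1 : (z + a) ^ (a - 1) ≥ (2 * z) ^ (a - 1) :=
        Real.rpow_le_rpow_of_nonpos hza h2z (by linarith)
      have hr2 : (2 * z) ^ (a - 1) = (2:ℝ) ^ (a - 1) * z ^ (a - 1) :=
        Real.mul_rpow (by norm_num) hz0.le
      have hr3 : (2:ℝ) ^ (a - 1) ≥ (2:ℝ) ^ (-1 : ℝ) :=
        Real.rpow_le_rpow_of_exponent_le (by norm_num) (by linarith)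
      have hr4 : (2:ℝ) ^ (-1 : ℝ) = 1/2 := by
        rw [Real.rpow_neg_one]; norm_num
      have hzz : z * z ^ (a - 1) = z ^ a := by
        have h := Real.rpow_add hz0 1 (a - 1)
        rw [Real.rpow_one] at h
        rw [← h]; norm_num
      have hzp : 0 < z ^ (a - 1) := Real.rpow_pos_of_pos hz0 _
      calc z * (z + a) ^ (a - 1) ≥ z * ((2:ℝ) ^ (a - 1) * z ^ (a - 1)) := by
            rw [← hr2]; exact mul_le_mul_of_nonneg_left hr1 hz0.le
        _ ≥ z * (1/2 * z ^ (a - 1)) := by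
            apply mul_le_mul_of_nonneg_left _ hz0.le
            apply mul_le_mul_of_nonneg_right _ hzp.le
            rw [← hr4]; exact hr3
        _ = 1/2 * z ^ a := by rw [show z * (1/2 * z ^ (a - 1)) = 1/2 * (z * z ^ (a - 1)) by ring, hzz]
    have hy4 : y ≤ 1/4 * z ^ a := by
      have : 4 * y ≤ z ^ a := h2
      linarith
    calc y * Real.Gamma z ≤ (1/4 * z ^ a) * Real.Gamma z := by
          apply mul_le_mul_of_nonneg_right hy4 hΓz.le
      _ = 1/2 * ((1/2 * z ^ a) * Real.Gamma z) := by ring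
      _ ≤ 1/2 * ((z * (z + a) ^ (a - 1)) * Real.Gamma z) := by
          apply mul_le_mul_of_nonneg_left _ (by norm_num)
          exact mul_le_mul_of_nonneg_right hB hΓz.le
      _ = 1/2 * (z * Real.Gamma z * (z + a) ^ (a - 1)) := by ring
      _ ≤ 1/2 * Real.Gamma (z + a) := by
          apply mul_le_mul_of_nonneg_left hA (by norm_num)
  rw [div_le_iff₀ hΓza]
  have hy' : y ≤ 1/2 * Real.Gamma (z + a) / Real.Gamma z := by
    rw [le_div_iff₀ hΓz]; linarith [hkey]
  calc y ^ (m+1) = y ^ m * y := pow_succ y m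
    _ ≤ y ^ m * (1/2 * Real.Gamma (z + a) / Real.Gamma z) :=
        mul_le_mul_of_nonneg_left hy' (pow_nonneg hy m)
    _ = 1/2 * (y ^ m / Real.Gamma z) * Real.Gamma (z + a) := by ring

section Chunk2
variable {a κ g T : ℝ}

/-- Continuity of the Mittag-Leffler function. -/
lemma continuous_mittagLeffler (ha : 0 < a) (ha1 : a ≤ 1) (hκ : 0 < κ) :
    Continuous (mittagLeffler a κ) := by
  rw [continuous_iff_continuousAt]
  intro x
  have hR : (0:ℝ) ≤ |x| + 1 := by positivity
  have hco : ContinuousOn (fun y : ℝ => ∑' m : ℕ, y ^ m / Real.Gamma (a * m + κ))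
      (Metric.ball 0 (|x| + 1)) := by
    apply continuousOn_tsum (fun i => (continuous_pow i).continuousOn.div_const _)
      (summable_ml ha ha1 hκ hR)
    intro n y hy
    have hy' : |y| ≤ |x| + 1 := by
      have := Metric.mem_ball.mp hy
      rw [Real.dist_eq, sub_zero] at this
      linarith
    have hΓ : 0 < Real.Gamma (a * n + κ) := Real.Gamma_pos_of_pos (by positivity)
    rw [norm_div, Real.norm_of_nonneg hΓ.le, norm_pow]
    gcongr
    exact hy'
  have hmem : x ∈ Metric.ball (0:ℝ) (|x| + 1) := by
    rw [Metric.mem_ball, Real.dist_eq, sub_zero]; linarith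
  exact (hco.continuousAt (Metric.isOpen_ball.mem_nhds hmem))

lemma abs_mittagLeffler_le (ha : 0 < a) (ha1 : a ≤ 1) (hκ : 0 < κ) {x y : ℝ} (h : |x| ≤ y) :
    |mittagLeffler a κ x| ≤ ∑' m : ℕ, y ^ m / Real.Gamma (a * m + κ) := by
  have hy : 0 ≤ y := (abs_nonneg x).trans h
  have hs : Summable (fun m : ℕ => y ^ m / Real.Gamma (a * m + κ)) := summable_ml ha ha1 hκ hy
  have hle : ∀ m : ℕ, ‖x ^ m / Real.Gamma (a * m + κ)‖ ≤ y ^ m / Real.Gamma (a * m + κ) := by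
    intro m
    have hΓ : 0 < Real.Gamma (a * m + κ) := Real.Gamma_pos_of_pos (by positivity)
    rw [norm_div, Real.norm_of_nonneg hΓ.le, norm_pow]
    gcongr
    exact h
  have hsn : Summable (fun m : ℕ => ‖x ^ m / Real.Gamma (a * m + κ)‖) :=
    Summable.of_nonneg_of_le (fun m => norm_nonneg _) hle hs
  calc |mittagLeffler a κ x| = ‖∑' m : ℕ, x ^ m / Real.Gamma (a * m + κ)‖ := rfl
    _ ≤ ∑' m : ℕ, ‖x ^ m / Real.Gamma (a * m + κ)‖ := norm_tsum_le_tsum_norm hsn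
    _ ≤ ∑' m : ℕ, y ^ m / Real.Gamma (a * m + κ) := Summable.tsum_le_tsum hle hsn hs

/-- The `m`-th term of the Mittag-Leffler density series. -/
noncomputable def mlTerm (a g : ℝ) (m : ℕ) (t : ℝ) : ℝ :=
  g * (-g) ^ m * t ^ (a * (m + 1) - 1) / Real.Gamma (a * (m + 1))

lemma mlTerm_eq (ha : 0 < a) {t : ℝ} (ht : 0 < t) (g : ℝ) (m : ℕ) :
    mlTerm a g m t = g * t ^ (a - 1) * ((-g * t ^ a) ^ m / Real.Gamma (a * m + a)) := by
  unfold mlTerm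
  have h1 : (t ^ a) ^ (m : ℕ) = t ^ (a * m) := by
    rw [← Real.rpow_natCast (t ^ a) m, ← Real.rpow_mul ht.le]
  have h2 : t ^ (a * (m + 1) - 1) = t ^ (a - 1) * t ^ (a * m) := by
    rw [← Real.rpow_add ht]
    congr 1
    push_cast; ring
  have h3 : a * m + a = a * ((m : ℕ) + 1) := by push_cast; ring
  rw [mul_pow, h1, h2, ← h3]
  ring

lemma mlKernel_eq_mlTerm (a g : ℝ) (t : ℝ) : mlKernel a g t = mlTerm a g 0 t := by
  unfold mlKernel mlTerm
  norm_num

lemma abs_mlTerm (ha : 0 < a) {t : ℝ} (ht : 0 < t) (hg : 0 ≤ g) (m : ℕ) :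
    |mlTerm a g m t| = g * t ^ (a - 1) * ((g * t ^ a) ^ m / Real.Gamma (a * m + a)) := by
  rw [mlTerm_eq ha ht g m]
  have hΓ : 0 < Real.Gamma (a * m + a) := Real.Gamma_pos_of_pos (by positivity)
  have htp : (0:ℝ) ≤ t ^ (a - 1) := (Real.rpow_pos_of_pos ht _).le
  have htp2 : (0:ℝ) ≤ t ^ a := (Real.rpow_pos_of_pos ht _).le
  rw [abs_mul, abs_div, abs_pow, abs_mul, abs_of_nonneg hg, abs_of_nonneg htp,
    abs_of_nonneg hΓ.le, abs_mul, abs_neg, abs_of_nonneg hg, abs_of_nonneg htp2]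

lemma summable_abs_mlTerm (ha : 0 < a) (ha1 : a ≤ 1) {t : ℝ} (ht : 0 < t) (hg : 0 ≤ g) :
    Summable (fun m : ℕ => |mlTerm a g m t|) := by
  have := (summable_ml ha ha1 ha (y := g * t ^ a) (by positivity)).mul_left (g * t ^ (a - 1))
  exact this.congr fun m => (abs_mlTerm ha ht hg m).symm

lemma summable_mlTerm (ha : 0 < a) (ha1 : a ≤ 1) {t : ℝ} (ht : 0 < t) (hg : 0 ≤ g) :
    Summable (fun m : ℕ => mlTerm a g m t) :=
  (summable_abs_mlTerm ha ha1 ht hg).of_abs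

lemma mlDensity_eq_tsum (ha : 0 < a) {t : ℝ} (ht : 0 < t) (g : ℝ) :
    mlDensity a g t = ∑' m : ℕ, mlTerm a g m t := by
  unfold mlDensity mittagLeffler
  rw [← tsum_mul_left]
  exact tsum_congr fun m => (mlTerm_eq ha ht g m).symm

lemma continuousOn_mlDensity (ha : 0 < a) (ha1 : a ≤ 1) :
    ContinuousOn (mlDensity a g) (Ioi (0:ℝ)) := by
  unfold mlDensity
  apply ContinuousOn.mul
  · apply continuousOn_const.mul
    intro x hx
    exact ((Real.continuousAt_rpow_const x _ (Or.inl (ne_of_gt hx))).continuousWithinAt)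
  · apply Continuous.comp_continuousOn (continuous_mittagLeffler ha ha1 ha)
    exact (continuous_const.mul (Real.continuous_rpow_const ha.le)).continuousOn

lemma integrableOn_rpow_Ioc {c : ℝ} (hc : -1 < c) (T : ℝ) :
    IntegrableOn (fun t : ℝ => t ^ c) (Ioc 0 T) :=
  (intervalIntegral.intervalIntegrable_rpow' hc).1

lemma integrableOn_mlKernel (ha : 0 < a) (ha1 : a ≤ 1) (T : ℝ) :
    IntegrableOn (mlKernel a g) (Ioc 0 T) := by
  have : mlKernel a g = fun t => (g / Real.Gamma a) * t ^ (a - 1) :=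
    funext fun t => by unfold mlKernel; ring
  rw [this]
  exact (integrableOn_rpow_Ioc (by linarith) T).const_mul _

lemma integrableOn_mlDensity (ha : 0 < a) (ha1 : a ≤ 1) (hg : 0 ≤ g) (hT : 0 ≤ T) :
    IntegrableOn (mlDensity a g) (Ioc 0 T) := by
  set C : ℝ := g * ∑' m : ℕ, (g * T ^ a) ^ m / Real.Gamma (a * m + a) with hC
  apply Integrable.mono' (g := fun t => C * t ^ (a - 1))
    ((integrableOn_rpow_Ioc (by linarith) T).const_mul C)
  · exact ((continuousOn_mlDensity ha ha1).mono Ioc_subset_Ioi_self).aestronglyMeasurable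
      measurableSet_Ioc
  · rw [ae_restrict_iff' measurableSet_Ioc]
    filter_upwards with t ht
    obtain ⟨ht0, htT⟩ := ht
    have htp : (0:ℝ) < t ^ (a - 1) := Real.rpow_pos_of_pos ht0 _
    have hbd : |mittagLeffler a a (-g * t ^ a)| ≤ ∑' m : ℕ, (g * T ^ a) ^ m
        / Real.Gamma (a * m + a) := by
      apply abs_mittagLeffler_le ha ha1 ha
      rw [abs_mul, abs_neg, abs_of_nonneg hg, abs_of_nonneg (Real.rpow_pos_of_pos ht0 a).le]
      exact mul_le_mul_of_nonneg_left (Real.rpow_le_rpow ht0.le htT ha.le) hg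
    calc ‖mlDensity a g t‖ = |g * t ^ (a - 1)| * |mittagLeffler a a (-g * t ^ a)| := by
          rw [← abs_mul]; rfl
      _ ≤ |g * t ^ (a - 1)| * (∑' m : ℕ, (g * T ^ a) ^ m / Real.Gamma (a * m + a)) :=
          mul_le_mul_of_nonneg_left hbd (abs_nonneg _)
      _ = C * t ^ (a - 1) := by
          rw [abs_mul, abs_of_nonneg hg, abs_of_nonneg htp.le, hC]; ring

end Chunk2

section Chunk3

lemma rpow_le_max {lo hi x e : ℝ} (hlo : 0 < lo) (h1 : lo ≤ x) (h2 : x ≤ hi) :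
    x ^ e ≤ max (lo ^ e) (hi ^ e) := by
  rcases le_or_gt 0 e with he | he
  · exact le_max_of_le_right (Real.rpow_le_rpow (hlo.le.trans h1) h2 he)
  · exact le_max_of_le_left (Real.rpow_le_rpow_of_nonpos hlo h1 he.le)

lemma continuousOn_beta_integrand {a b t : ℝ} {S : Set ℝ} (hS : S ⊆ Ioo 0 t) :
    ContinuousOn (fun s : ℝ => (t - s) ^ (a - 1) * s ^ (b - 1)) S := by
  intro x hx
  have hx' := hS hx
  have c1 : ContinuousAt (fun s : ℝ => (t - s) ^ (a - 1)) x :=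
    ContinuousAt.rpow_const (continuous_sub_left t).continuousAt
      (Or.inl (sub_ne_zero.mpr hx'.2.ne'))
  have c2 : ContinuousAt (fun s : ℝ => s ^ (b - 1)) x :=
    ContinuousAt.rpow_const continuousAt_id (Or.inl hx'.1.ne')
  exact (c1.mul c2).continuousWithinAt

lemma integrableOn_beta {a b t : ℝ} (ha : 0 < a) (hb : 0 < b) (ht : 0 < t) :
    IntegrableOn (fun s : ℝ => (t - s) ^ (a - 1) * s ^ (b - 1)) (Ioo 0 t) := by
  have ht2 : (0:ℝ) < t / 2 := by linarith
  have hsub : Ioo (0:ℝ) t ⊆ Ioo 0 (t/2) ∪ Ico (t/2) t := by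
    intro s hs
    rcases lt_or_ge s (t/2) with h | h
    · exact Or.inl ⟨hs.1, h⟩
    · exact Or.inr ⟨h, hs.2⟩
  apply IntegrableOn.mono_set _ hsub
  apply IntegrableOn.union
  · -- near 0 : bound (t-s)^(a-1) by a constant
    set C1 : ℝ := max ((t/2) ^ (a-1)) (t ^ (a-1)) with hC1
    apply Integrable.mono' (g := fun s => C1 * s ^ (b - 1))
      (((integrableOn_rpow_Ioc (by linarith) (t/2)).mono_set Ioo_subset_Ioc_self).const_mul C1)
    · exact (continuousOn_beta_integrand (fun s hs => ⟨hs.1, hs.2.trans (by linarith)⟩)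
        ).aestronglyMeasurable measurableSet_Ioo
    · rw [ae_restrict_iff' measurableSet_Ioo]
      filter_upwards with s hs
      have h1 : (0:ℝ) < t - s := by nlinarith [hs.1, hs.2]
      have h2 : (0:ℝ) < s := hs.1
      rw [norm_mul, Real.norm_of_nonneg (Real.rpow_pos_of_pos h1 _).le,
        Real.norm_of_nonneg (Real.rpow_pos_of_pos h2 _).le]
      apply mul_le_mul_of_nonneg_right _ (Real.rpow_pos_of_pos h2 _).le
      exact rpow_le_max ht2 (by linarith [hs.2]) (by linarith [hs.1])
  · -- near t : bound s^(b-1) by a constant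
    rw [show Ico (t/2) t = Ioo (t/2) t ∪ {t/2} from (Ioo_union_left (by linarith)).symm]
    apply IntegrableOn.union _ ((integrableOn_singleton_iff).mpr (Or.inr (by simp)))
    set C2 : ℝ := max ((t/2) ^ (b-1)) (t ^ (b-1)) with hC2
    have hmaj : IntegrableOn (fun s : ℝ => (t - s) ^ (a - 1) * C2) (Ioo (t/2) t) := by
      have h0 := ((intervalIntegral.intervalIntegrable_rpow' (show (-1:ℝ) < a - 1 by linarith)
        (a := 0) (b := t/2)).comp_sub_left t)
      rw [show t - (0:ℝ) = t by ring, show t - t/2 = t/2 by ring] at h0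
      exact (h0.2.mono_set Ioo_subset_Ioc_self).mul_const C2
    apply Integrable.mono' hmaj
    · exact (continuousOn_beta_integrand (fun s hs => ⟨lt_trans ht2 hs.1, hs.2⟩)
        ).aestronglyMeasurable measurableSet_Ioo
    · rw [ae_restrict_iff' measurableSet_Ioo]
      filter_upwards with s hs
      have h1 : (0:ℝ) < t - s := by linarith [hs.2]
      have h2 : (0:ℝ) < s := lt_trans ht2 hs.1
      rw [norm_mul, Real.norm_of_nonneg (Real.rpow_pos_of_pos h1 _).le,
        Real.norm_of_nonneg (Real.rpow_pos_of_pos h2 _).le]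
      apply mul_le_mul_of_nonneg_left _ (Real.rpow_pos_of_pos h1 _).le
      exact rpow_le_max ht2 hs.1.le hs.2.le

lemma beta_value {a b t : ℝ} (ha : 0 < a) (hb : 0 < b) (ht : 0 < t) :
    ∫ s in Ioo (0:ℝ) t, (t - s) ^ (a - 1) * s ^ (b - 1) =
      Real.Gamma a * Real.Gamma b / Real.Gamma (a + b) * t ^ (a + b - 1) := by
  have hreC : 0 < Complex.re (b : ℂ) := by simpa using hb
  have hreC' : 0 < Complex.re (a : ℂ) := by simpa using ha
  have hsc := Complex.betaIntegral_scaled (b : ℂ) (a : ℂ) ht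
  have hBG := Complex.Gamma_mul_Gamma_eq_betaIntegral hreC hreC'
  have hΓne : Complex.Gamma ((b:ℂ) + (a:ℂ)) ≠ 0 := by
    rw [show ((b:ℂ) + (a:ℂ)) = ((b + a : ℝ) : ℂ) by push_cast; ring, Complex.Gamma_ofReal]
    exact_mod_cast (Real.Gamma_pos_of_pos (by linarith : (0:ℝ) < b + a)).ne'
  have hbeta : Complex.betaIntegral (b:ℂ) (a:ℂ) =
      Complex.Gamma (b:ℂ) * Complex.Gamma (a:ℂ) / Complex.Gamma ((b:ℂ) + (a:ℂ)) := by
    rw [eq_div_iff hΓne]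
    linear_combination -hBG
  -- identify the complex interval integral with the real one
  have h2 : ∀ x ∈ uIcc (0:ℝ) t,
      ((x ^ (b-1) * (t - x) ^ (a-1) : ℝ) : ℂ) = (x:ℂ) ^ ((b:ℂ)-1) * ((t:ℂ)-(x:ℂ)) ^ ((a:ℂ)-1) := by
    intro x hx
    rw [uIcc_of_le ht.le] at hx
    obtain ⟨hx0, hxt⟩ := hx
    rw [Complex.ofReal_mul, Complex.ofReal_cpow hx0, Complex.ofReal_cpow (by linarith : (0:ℝ) ≤ t - x)]
    push_cast
    ring
  have h3 : ((∫ x in (0:ℝ)..t, x ^ (b-1) * (t - x) ^ (a-1) : ℝ) : ℂ) =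
      (t:ℂ) ^ ((b:ℂ) + (a:ℂ) - 1) * Complex.betaIntegral (b:ℂ) (a:ℂ) := by
    rw [← intervalIntegral.integral_ofReal, intervalIntegral.integral_congr h2, hsc]
  rw [hbeta] at h3
  have h4 : (t:ℂ) ^ ((b:ℂ) + (a:ℂ) - 1) = ((t ^ (a + b - 1) : ℝ) : ℂ) := by
    rw [Complex.ofReal_cpow ht.le]
    push_cast
    ring_nf
  rw [h4, show Complex.Gamma (b:ℂ) = ((Real.Gamma b : ℝ):ℂ) from Complex.Gamma_ofReal b,
    show Complex.Gamma (a:ℂ) = ((Real.Gamma a : ℝ):ℂ) from Complex.Gamma_ofReal a,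
    show ((b:ℂ) + (a:ℂ)) = ((b + a : ℝ) : ℂ) by push_cast; ring, Complex.Gamma_ofReal] at h3
  have h5 : (∫ x in (0:ℝ)..t, x ^ (b-1) * (t - x) ^ (a-1)) =
      t ^ (a + b - 1) * (Real.Gamma b * Real.Gamma a / Real.Gamma (b + a)) := by
    have := h3
    rw [← Complex.ofReal_mul, ← Complex.ofReal_div, ← Complex.ofReal_mul] at this
    exact_mod_cast this
  have h6 : (∫ x in (0:ℝ)..t, x ^ (b-1) * (t - x) ^ (a-1)) =
      ∫ s in Ioo (0:ℝ) t, (t - s) ^ (a - 1) * s ^ (b - 1) := by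
    rw [intervalIntegral.integral_of_le ht.le, integral_Ioc_eq_integral_Ioo]
    exact setIntegral_congr_fun measurableSet_Ioo fun x _ => by ring
  rw [← h6, h5, show b + a = a + b by ring]
  ring

end Chunk3

section Chunk4
variable {a g : ℝ}

lemma mlTerm_mul_mlKernel (a g : ℝ) (m : ℕ) (t s : ℝ) :
    mlTerm a g m (t - s) * mlKernel a g s =
      (g * (-g) ^ m * g / (Real.Gamma (a * ((m:ℝ) + 1)) * Real.Gamma a)) *
        ((t - s) ^ (a * ((m:ℝ) + 1) - 1) * s ^ (a - 1)) := by
  unfold mlTerm mlKernel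
  ring

lemma integral_mlTerm_conv (ha : 0 < a) (m : ℕ) {t : ℝ} (ht : 0 < t) :
    ∫ s in Ioo (0:ℝ) t, mlTerm a g m (t - s) * mlKernel a g s = -(mlTerm a g (m + 1) t) := by
  have hβ : 0 < a * ((m:ℝ) + 1) := by positivity
  have heq : (fun s => mlTerm a g m (t - s) * mlKernel a g s) =
      fun s => (g * (-g) ^ m * g / (Real.Gamma (a * ((m:ℝ) + 1)) * Real.Gamma a)) *
        ((t - s) ^ (a * ((m:ℝ) + 1) - 1) * s ^ (a - 1)) :=
    funext fun s => mlTerm_mul_mlKernel a g m t s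
  rw [heq, integral_const_mul, beta_value hβ ha ht]
  have hΓβ : Real.Gamma (a * ((m:ℝ) + 1)) ≠ 0 := (Real.Gamma_pos_of_pos hβ).ne'
  have hΓa : Real.Gamma a ≠ 0 := (Real.Gamma_pos_of_pos ha).ne'
  unfold mlTerm
  rw [show a * ((m:ℝ) + 1) + a = a * (((m:ℕ) + 1 : ℕ) + 1) by push_cast; ring]
  have hΓs : Real.Gamma (a * (((m:ℕ) + 1 : ℕ) + 1)) ≠ 0 :=
    (Real.Gamma_pos_of_pos (by positivity)).ne'
  field_simp
  push_cast
  ring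

lemma conv_mlDensity_mlKernel (ha : 0 < a) (ha1 : a ≤ 1) (hg : 0 < g) {t : ℝ} (ht : 0 < t) :
    conv (mlDensity a g) (mlKernel a g) t = mlKernel a g t - mlDensity a g t := by
  have hF : ∀ m : ℕ, AEStronglyMeasurable (fun s => mlTerm a g m (t - s) * mlKernel a g s)
      (volume.restrict (Ioo 0 t)) := by
    intro m
    have := ((continuousOn_beta_integrand (a := a * ((m:ℝ) + 1)) (b := a) (t := t)
      (subset_refl _)).aestronglyMeasurable (μ := volume) measurableSet_Ioo).const_mul
      (g * (-g) ^ m * g / (Real.Gamma (a * ((m:ℝ) + 1)) * Real.Gamma a))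
    exact this.congr (Filter.Eventually.of_forall fun s => (mlTerm_mul_mlKernel a g m t s).symm)
  have hInt : ∀ m : ℕ, IntegrableOn (fun s => mlTerm a g m (t - s) * mlKernel a g s) (Ioo 0 t) := by
    intro m
    have hβ : 0 < a * ((m:ℝ) + 1) := by positivity
    have := (integrableOn_beta hβ ha ht).const_mul
      (g * (-g) ^ m * g / (Real.Gamma (a * ((m:ℝ) + 1)) * Real.Gamma a))
    exact this.congr (Filter.Eventually.of_forall fun s => (mlTerm_mul_mlKernel a g m t s).symm)
  have habs : ∀ m : ℕ, (∫ s in Ioo (0:ℝ) t, ‖mlTerm a g m (t - s) * mlKernel a g s‖)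
      = |mlTerm a g (m + 1) t| := by
    intro m
    set c := g * (-g) ^ m * g / (Real.Gamma (a * ((m:ℝ) + 1)) * Real.Gamma a) with hc
    have hpos : ∀ s ∈ Ioo (0:ℝ) t, (0:ℝ) ≤ (t - s) ^ (a * ((m:ℝ) + 1) - 1) * s ^ (a - 1) :=
      fun s hs => mul_nonneg (Real.rpow_pos_of_pos (by linarith [hs.2]) _).le
        (Real.rpow_pos_of_pos hs.1 _).le
    have h1 : (∫ s in Ioo (0:ℝ) t, ‖mlTerm a g m (t - s) * mlKernel a g s‖)
        = |c| * ∫ s in Ioo (0:ℝ) t, (t - s) ^ (a * ((m:ℝ) + 1) - 1) * s ^ (a - 1) := by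
      rw [← integral_const_mul]
      apply setIntegral_congr_fun measurableSet_Ioo
      intro s hs
      dsimp only
      rw [mlTerm_mul_mlKernel a g m t s, norm_mul, Real.norm_eq_abs, Real.norm_eq_abs,
        abs_of_nonneg (hpos s hs)]
    have h2 : mlTerm a g (m + 1) t
        = -(c * ∫ s in Ioo (0:ℝ) t, (t - s) ^ (a * ((m:ℝ) + 1) - 1) * s ^ (a - 1)) := by
      have := integral_mlTerm_conv (g := g) ha m ht
      rw [show (fun s => mlTerm a g m (t - s) * mlKernel a g s) = fun s =>
        c * ((t - s) ^ (a * ((m:ℝ) + 1) - 1) * s ^ (a - 1))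
        from funext fun s => mlTerm_mul_mlKernel a g m t s, integral_const_mul] at this
      linarith [this]
    have hnn : (0:ℝ) ≤ ∫ s in Ioo (0:ℝ) t, (t - s) ^ (a * ((m:ℝ) + 1) - 1) * s ^ (a - 1) :=
      setIntegral_nonneg measurableSet_Ioo hpos
    rw [h1, h2, abs_neg, abs_mul, abs_of_nonneg hnn]
  -- rewrite conv as a set integral over Ioo
  have hconv : conv (mlDensity a g) (mlKernel a g) t
      = ∫ s in Ioo (0:ℝ) t, mlDensity a g (t - s) * mlKernel a g s := by
    rw [conv, intervalIntegral.integral_of_le ht.le, integral_Ioc_eq_integral_Ioo]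
  rw [hconv]
  have hcongr : (∫ s in Ioo (0:ℝ) t, mlDensity a g (t - s) * mlKernel a g s)
      = ∫ s in Ioo (0:ℝ) t, ∑' m : ℕ, mlTerm a g m (t - s) * mlKernel a g s := by
    apply setIntegral_congr_fun measurableSet_Ioo
    intro s hs
    dsimp only
    rw [mlDensity_eq_tsum ha (by linarith [hs.2] : (0:ℝ) < t - s) g, tsum_mul_right]
  rw [hcongr]
  have hlint : ∑' m : ℕ, ∫⁻ s in Ioo (0:ℝ) t, ‖mlTerm a g m (t - s) * mlKernel a g s‖₊ ≠ ⊤ := by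
    have hEq : ∀ m : ℕ, (∫⁻ s in Ioo (0:ℝ) t, ‖mlTerm a g m (t - s) * mlKernel a g s‖₊)
        = ENNReal.ofReal (|mlTerm a g (m + 1) t|) := by
      intro m
      rw [← habs m]; exact (ofReal_integral_norm_eq_lintegral_enorm (hInt m)).symm
    rw [tsum_congr hEq]
    have hsum : Summable (fun m : ℕ => |mlTerm a g (m + 1) t|) :=
      (summable_nat_add_iff 1).mpr (summable_abs_mlTerm ha ha1 ht hg.le)
    rw [← ENNReal.ofReal_tsum_of_nonneg (fun m => abs_nonneg _) hsum]
    exact ENNReal.ofReal_ne_top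
  rw [integral_tsum hF hlint]
  have hterm : ∀ m : ℕ, (∫ s in Ioo (0:ℝ) t, mlTerm a g m (t - s) * mlKernel a g s)
      = -(mlTerm a g (m + 1) t) := fun m => integral_mlTerm_conv ha m ht
  rw [tsum_congr hterm, tsum_neg]
  have hsummlTerm : Summable (fun m : ℕ => mlTerm a g m t) := summable_mlTerm ha ha1 ht hg.le
  have hshift := (Summable.tsum_eq_zero_add hsummlTerm).symm
  rw [mlDensity_eq_tsum ha ht g, mlKernel_eq_mlTerm]
  have : ∑' m : ℕ, mlTerm a g (m + 1) t = (∑' m : ℕ, mlTerm a g m t) - mlTerm a g 0 t := by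
    rw [Summable.tsum_eq_zero_add hsummlTerm]
    ring
  rw [this]
  ring

end Chunk4

section Chunk5
open scoped Convolution

/-- truncation to `(0, T]`, extended by zero. -/
noncomputable def trunc (T : ℝ) (f : ℝ → ℝ) : ℝ → ℝ := Set.indicator (Ioc 0 T) f

lemma trunc_of_mem {T : ℝ} {f : ℝ → ℝ} {s : ℝ} (hs : s ∈ Ioc (0:ℝ) T) : trunc T f s = f s :=
  Set.indicator_of_mem hs f

lemma trunc_of_not_mem {T : ℝ} {f : ℝ → ℝ} {s : ℝ} (hs : s ∉ Ioc (0:ℝ) T) : trunc T f s = 0 :=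
  Set.indicator_of_notMem hs f

lemma integrable_trunc {T : ℝ} {f : ℝ → ℝ} (hf : IntegrableOn f (Ioc 0 T)) :
    Integrable (trunc T f) :=
  (integrable_indicator_iff measurableSet_Ioc).mpr hf

/-- The interval `conv` agrees with the full-line convolution of truncations. -/
lemma conv_eq_convolution (f g : ℝ → ℝ) {T t : ℝ} (ht0 : 0 ≤ t) (htT : t ≤ T) :
    conv f g t = (trunc T f ⋆[ContinuousLinearMap.mul ℝ ℝ] trunc T g) t := by
  have hswap : conv f g t = ∫ u in (0:ℝ)..t, f u * g (t - u) := by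
    rw [conv]
    have := intervalIntegral.integral_comp_sub_left (a := 0) (b := t)
      (fun u => f u * g (t - u)) t
    rw [sub_self, sub_zero] at this
    rw [← this]
    apply intervalIntegral.integral_congr
    intro s _
    simp only [sub_sub_cancel]
  rw [hswap, convolution_def]
  have hind : (fun s => (ContinuousLinearMap.mul ℝ ℝ) (trunc T f s) (trunc T g (t - s)))
      = Set.indicator (Ioo 0 t) (fun s => f s * g (t - s)) := by
    funext s
    simp only [ContinuousLinearMap.mul_apply']
    by_cases hs : s ∈ Ioo (0:ℝ) t
    · rw [Set.indicator_of_mem hs, trunc_of_mem ⟨hs.1, hs.2.le.trans htT⟩,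
        trunc_of_mem ⟨by linarith [hs.2], by linarith [hs.1]⟩]
    · rw [Set.indicator_of_notMem hs]
      rcases not_and_or.mp hs with h | h
      · rw [trunc_of_not_mem (fun hc => h hc.1), zero_mul]
      · push_neg at h
        rw [trunc_of_not_mem (f := g) (s := t - s) (fun hc => by linarith [hc.1]), mul_zero]
  rw [hind, integral_indicator measurableSet_Ioo,
    intervalIntegral.integral_of_le ht0, integral_Ioc_eq_integral_Ioo]

lemma convolution_trunc_zero_of_nonpos (f g : ℝ → ℝ) (T : ℝ) {u : ℝ} (hu : u ≤ 0) :
    (trunc T f ⋆[ContinuousLinearMap.mul ℝ ℝ] trunc T g) u = 0 := by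
  rw [convolution_def]
  have : ∀ s : ℝ, (ContinuousLinearMap.mul ℝ ℝ) (trunc T f s) (trunc T g (u - s)) = 0 := by
    intro s
    simp only [ContinuousLinearMap.mul_apply']
    by_cases hs : s ∈ Ioc (0:ℝ) T
    · rw [trunc_of_not_mem (f := g) (s := u - s) (fun hc => by linarith [hs.1, hc.1]), mul_zero]
    · rw [trunc_of_not_mem hs, zero_mul]
  simp only [this, integral_zero]

/-- For `t ≤ T` we can drop the truncation on the right factor, provided it vanishes on
`(-∞, 0]`. -/
lemma convolution_trunc_right_eq (f W : ℝ → ℝ) {T t : ℝ} (ht : t ≤ T)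
    (hW : ∀ u : ℝ, u ≤ 0 → W u = 0) :
    (trunc T f ⋆[ContinuousLinearMap.mul ℝ ℝ] trunc T W) t
      = (trunc T f ⋆[ContinuousLinearMap.mul ℝ ℝ] W) t := by
  rw [convolution_def, convolution_def]
  apply integral_congr_ae
  apply Filter.Eventually.of_forall
  intro s
  simp only [ContinuousLinearMap.mul_apply']
  by_cases hs : s ∈ Ioc (0:ℝ) T
  · by_cases hts : t - s ≤ 0
    · rw [trunc_of_not_mem (f := W) (s := t - s) (fun hc => by linarith [hc.1]), hW _ hts]
    · push_neg at hts
      rw [trunc_of_mem ⟨hts, by linarith [hs.1]⟩]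
  · rw [trunc_of_not_mem hs, zero_mul, zero_mul]

/-- convolution with `mul` is commutative. -/
lemma convolution_mul_comm (F G : ℝ → ℝ) (x : ℝ) :
    (F ⋆[ContinuousLinearMap.mul ℝ ℝ] G) x = (G ⋆[ContinuousLinearMap.mul ℝ ℝ] F) x := by
  rw [convolution_eq_swap, convolution_def]
  simp only [ContinuousLinearMap.mul_apply']
  exact integral_congr_ae (Filter.Eventually.of_forall fun s => mul_comm _ _)

/-- a.e.-congruence in the right factor of a convolution. -/
lemma convolution_congr_right {W W' : ℝ → ℝ} (F : ℝ → ℝ) (h : W =ᵐ[volume] W') (x : ℝ) :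
    (F ⋆[ContinuousLinearMap.mul ℝ ℝ] W) x = (F ⋆[ContinuousLinearMap.mul ℝ ℝ] W') x := by
  rw [convolution_def, convolution_def]
  apply integral_congr_ae
  have : ∀ᵐ s ∂(volume : Measure ℝ), W (x - s) = W' (x - s) :=
    (quasiMeasurePreserving_sub_left_of_right_invariant volume x).ae h
  filter_upwards [this] with s hs
  simp only [ContinuousLinearMap.mul_apply', hs]

end Chunk5

section Chunk6
open scoped Convolution
open ContinuousLinearMap

lemma convolution_assoc_ae (F G K : ℝ → ℝ) (hF : Integrable F) (hG : Integrable G)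
    (hK : Integrable K) :
    ∀ᵐ t ∂(volume : Measure ℝ),
      ((F ⋆[ContinuousLinearMap.mul ℝ ℝ] G) ⋆[ContinuousLinearMap.mul ℝ ℝ] K) t
        = (F ⋆[ContinuousLinearMap.mul ℝ ℝ] (G ⋆[ContinuousLinearMap.mul ℝ ℝ] K)) t := by
  have h1 : ∀ᵐ y ∂(volume : Measure ℝ),
      ConvolutionExistsAt F G y (ContinuousLinearMap.mul ℝ ℝ) volume :=
    hF.ae_convolution_exists _ hG
  have h2 : ∀ᵐ x ∂(volume : Measure ℝ),
      ConvolutionExistsAt (fun x => ‖G x‖) (fun x => ‖K x‖) x (ContinuousLinearMap.mul ℝ ℝ)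
        volume := hG.norm.ae_convolution_exists _ hK.norm
  have h3 : ∀ᵐ x ∂(volume : Measure ℝ),
      ConvolutionExistsAt (fun x => ‖F x‖)
        ((fun x => ‖G x‖) ⋆[ContinuousLinearMap.mul ℝ ℝ] fun x => ‖K x‖) x
        (ContinuousLinearMap.mul ℝ ℝ) volume :=
    hF.norm.ae_convolution_exists _ (hG.norm.integrable_convolution _ hK.norm)
  filter_upwards [h3] with x₀ hx₀
  exact convolution_assoc _ _ _ _ (fun a b c => mul_assoc a b c) hF.aestronglyMeasurable
    hG.aestronglyMeasurable hK.aestronglyMeasurable h1 h2 hx₀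

variable {α γ : ℝ}

/-- The middle step : `((f_T ⋆ R_T) ⋆ W_T) t = (R_T ⋆ W_T) t - (f_T ⋆ W_T) t` for a.e. `t ≤ T`. -/
lemma conv_fR_W (hα0 : 0 < α) (hα1 : α < 1) (hγ : 0 < γ) {T : ℝ} (hT : 0 ≤ T)
    (W : ℝ → ℝ) (hW : IntegrableOn W (Ioc 0 T)) :
    ∀ᵐ t ∂(volume : Measure ℝ), t ≤ T →
      (((trunc T (mlDensity α γ)) ⋆[ContinuousLinearMap.mul ℝ ℝ] (trunc T (mlKernel α γ)))
          ⋆[ContinuousLinearMap.mul ℝ ℝ] trunc T W) t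
        = ((trunc T (mlKernel α γ)) ⋆[ContinuousLinearMap.mul ℝ ℝ] trunc T W) t
          - ((trunc T (mlDensity α γ)) ⋆[ContinuousLinearMap.mul ℝ ℝ] trunc T W) t := by
  set fT := trunc T (mlDensity α γ) with hfT_def
  set RT := trunc T (mlKernel α γ) with hRT_def
  set WT := trunc T W with hWT_def
  have hfT : Integrable fT := integrable_trunc (integrableOn_mlDensity hα0 hα1.le hγ.le hT)
  have hRT : Integrable RT := integrable_trunc (integrableOn_mlKernel hα0 hα1.le T)
  have hWT : Integrable WT := integrable_trunc hW
  have hkey : ∀ t : ℝ, t ≤ T → ∀ s : ℝ,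
      (fT ⋆[ContinuousLinearMap.mul ℝ ℝ] RT) s * WT (t - s) = (RT s - fT s) * WT (t - s) := by
    intro t ht s
    by_cases hWs : WT (t - s) = 0
    · rw [hWs, mul_zero, mul_zero]
    have hmem : t - s ∈ Ioc (0:ℝ) T := by
      by_contra h
      exact hWs (trunc_of_not_mem h)
    have hs_lt : s < t := by linarith [hmem.1]
    rcases le_or_gt s 0 with h0 | h0
    · rw [hfT_def, hRT_def, convolution_trunc_zero_of_nonpos _ _ _ h0,
        trunc_of_not_mem (T := T) (f := mlKernel α γ) (s := s) (fun hc => by linarith [hc.1]),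
        trunc_of_not_mem (T := T) (f := mlDensity α γ) (s := s) (fun hc => by linarith [hc.1])]
      norm_num
    · have hsT : s ≤ T := by linarith
      rw [hfT_def, hRT_def, ← conv_eq_convolution (mlDensity α γ) (mlKernel α γ) h0.le hsT,
        conv_mlDensity_mlKernel hα0 hα1.le hγ h0,
        trunc_of_mem (T := T) (f := mlKernel α γ) ⟨h0, hsT⟩,
        trunc_of_mem (T := T) (f := mlDensity α γ) ⟨h0, hsT⟩]
  have h4 : ∀ᵐ t ∂(volume : Measure ℝ),
      ConvolutionExistsAt RT WT t (ContinuousLinearMap.mul ℝ ℝ) volume :=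
    hRT.ae_convolution_exists _ hWT
  have h5 : ∀ᵐ t ∂(volume : Measure ℝ),
      ConvolutionExistsAt fT WT t (ContinuousLinearMap.mul ℝ ℝ) volume :=
    hfT.ae_convolution_exists _ hWT
  filter_upwards [h4, h5] with t h4' h5'
  intro ht
  have h4i : Integrable (fun s => RT s * WT (t - s)) volume := by
    have := h4'.integrable
    simpa only [ContinuousLinearMap.mul_apply'] using this
  have h5i : Integrable (fun s => fT s * WT (t - s)) volume := by
    have := h5'.integrable
    simpa only [ContinuousLinearMap.mul_apply'] using this
  calc ((fT ⋆[ContinuousLinearMap.mul ℝ ℝ] RT) ⋆[ContinuousLinearMap.mul ℝ ℝ] WT) t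
      = ∫ s, ((fT ⋆[ContinuousLinearMap.mul ℝ ℝ] RT) s) * WT (t - s) := by
        rw [convolution_def]; simp only [ContinuousLinearMap.mul_apply']
    _ = ∫ s, (RT s * WT (t - s) - fT s * WT (t - s)) := by
        apply integral_congr_ae
        apply Filter.Eventually.of_forall
        intro s
        dsimp only
        rw [hkey t ht s, sub_mul]
    _ = (∫ s, RT s * WT (t - s)) - ∫ s, fT s * WT (t - s) := integral_sub h4i h5i
    _ = (RT ⋆[ContinuousLinearMap.mul ℝ ℝ] WT) t
          - (fT ⋆[ContinuousLinearMap.mul ℝ ℝ] WT) t := by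
        rw [convolution_def, convolution_def]; simp only [ContinuousLinearMap.mul_apply']

end Chunk6

section Main
open scoped Convolution

theorem variation_of_constants_for_ml_volterra
    (α γ : ℝ) (hα : α ∈ Set.Ioo (0:ℝ) 1) (hγ : 0 < γ)
    (H : ℝ → ℝ) (hH : ∀ T : ℝ, 0 ≤ T → IntegrableOn H (Set.Icc 0 T))
    (X : ℝ → ℝ) (hX : ∀ t : ℝ, X t = H t + conv (mlKernel α γ) H t) :
    ((∀ T : ℝ, 0 ≤ T → IntegrableOn X (Set.Icc 0 T)) ∧
      (∀ᵐ t ∂(volume.restrict (Set.Ici (0:ℝ))), X t = H t + conv (mlDensity α γ) X t)) ∧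
    (∀ Y : ℝ → ℝ, (∀ T : ℝ, 0 ≤ T → IntegrableOn Y (Set.Icc 0 T)) →
      (∀ᵐ t ∂(volume.restrict (Set.Ici (0:ℝ))), Y t = H t + conv (mlDensity α γ) Y t) →
      Y =ᵐ[volume.restrict (Set.Ici (0:ℝ))] X) := by
  obtain ⟨hα0, hα1⟩ := hα
  have hHIoc : ∀ T : ℝ, 0 ≤ T → IntegrableOn H (Ioc 0 T) :=
    fun T hT => (hH T hT).mono_set Ioc_subset_Icc_self
  -- X is locally integrable
  have hXint : ∀ T : ℝ, 0 ≤ T → IntegrableOn X (Icc 0 T) := by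
    intro T hT
    have hconvI : IntegrableOn (conv (mlKernel α γ) H) (Icc 0 T) := by
      have hG : Integrable (trunc T (mlKernel α γ) ⋆[ContinuousLinearMap.mul ℝ ℝ] trunc T H) :=
        (integrable_trunc (integrableOn_mlKernel hα0 hα1.le T)).integrable_convolution _
          (integrable_trunc (hHIoc T hT))
      apply (hG.integrableOn (s := Icc 0 T)).congr
      rw [Filter.EventuallyEq, ae_restrict_iff' measurableSet_Icc]
      exact Filter.Eventually.of_forall fun t ht => (conv_eq_convolution _ _ ht.1 ht.2).symm
    exact ((hH T hT).add hconvI).congr (Filter.Eventually.of_forall fun t => (hX t).symm)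
  -- existence per T
  have hexist : ∀ T : ℝ, 0 ≤ T →
      ∀ᵐ t ∂(volume.restrict (Ioc (0:ℝ) T)), X t = H t + conv (mlDensity α γ) X t := by
    intro T hT
    set fT := trunc T (mlDensity α γ) with hfT_def
    set RT := trunc T (mlKernel α γ) with hRT_def
    set HT := trunc T H with hHT_def
    have hfTi : Integrable fT := integrable_trunc (integrableOn_mlDensity hα0 hα1.le hγ.le hT)
    have hRTi : Integrable RT := integrable_trunc (integrableOn_mlKernel hα0 hα1.le T)
    have hHTi : Integrable HT := integrable_trunc (hHIoc T hT)
    have hW2i : Integrable (RT ⋆[ContinuousLinearMap.mul ℝ ℝ] HT) :=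
      hRTi.integrable_convolution _ hHTi
    have hCTi : Integrable (trunc T (RT ⋆[ContinuousLinearMap.mul ℝ ℝ] HT)) :=
      integrable_trunc hW2i.integrableOn
    have hXT : trunc T X = (HT + trunc T (RT ⋆[ContinuousLinearMap.mul ℝ ℝ] HT)) := by
      rw [hHT_def, hRT_def]
      funext s
      by_cases hs : s ∈ Ioc (0:ℝ) T
      · rw [Pi.add_apply, trunc_of_mem hs, trunc_of_mem hs, trunc_of_mem hs, hX s,
          conv_eq_convolution (mlKernel α γ) H hs.1.le hs.2]
      · rw [Pi.add_apply, trunc_of_not_mem hs, trunc_of_not_mem hs, trunc_of_not_mem hs]; ring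
    have hEx1 : ∀ᵐ t ∂(volume : Measure ℝ),
        ConvolutionExistsAt fT HT t (ContinuousLinearMap.mul ℝ ℝ) volume :=
      hfTi.ae_convolution_exists _ hHTi
    have hEx2 : ∀ᵐ t ∂(volume : Measure ℝ),
        ConvolutionExistsAt fT (trunc T (RT ⋆[ContinuousLinearMap.mul ℝ ℝ] HT)) t
          (ContinuousLinearMap.mul ℝ ℝ) volume :=
      hfTi.ae_convolution_exists _ hCTi
    have hassoc := convolution_assoc_ae fT RT HT hfTi hRTi hHTi
    have hmid := conv_fR_W hα0 hα1 hγ hT H (hHIoc T hT)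
    rw [ae_restrict_iff' measurableSet_Ioc]
    filter_upwards [hEx1, hEx2, hassoc, hmid] with t h1 h2 h3 h4
    intro htmem
    have ht0 : (0:ℝ) ≤ t := htmem.1.le
    have htT : t ≤ T := htmem.2
    have e1 : conv (mlDensity α γ) X t
        = (fT ⋆[ContinuousLinearMap.mul ℝ ℝ] trunc T X) t := conv_eq_convolution _ _ ht0 htT
    have e2 : (fT ⋆[ContinuousLinearMap.mul ℝ ℝ] trunc T X) t
        = (fT ⋆[ContinuousLinearMap.mul ℝ ℝ] HT) t
          + (fT ⋆[ContinuousLinearMap.mul ℝ ℝ]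
              trunc T (RT ⋆[ContinuousLinearMap.mul ℝ ℝ] HT)) t := by
      rw [hXT]; exact h1.distrib_add h2
    have e3 : (fT ⋆[ContinuousLinearMap.mul ℝ ℝ]
          trunc T (RT ⋆[ContinuousLinearMap.mul ℝ ℝ] HT)) t
        = (fT ⋆[ContinuousLinearMap.mul ℝ ℝ] (RT ⋆[ContinuousLinearMap.mul ℝ ℝ] HT)) t :=
      convolution_trunc_right_eq (mlDensity α γ) (RT ⋆[ContinuousLinearMap.mul ℝ ℝ] HT) htT
        (fun u hu => convolution_trunc_zero_of_nonpos _ _ _ hu)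
    have e5 := h4 htT
    have e6 : (RT ⋆[ContinuousLinearMap.mul ℝ ℝ] HT) t = conv (mlKernel α γ) H t :=
      (conv_eq_convolution _ _ ht0 htT).symm
    have e7 := hX t
    rw [e1, e2, e3, ← h3, e5, e6]
    linarith
  -- exhaustion principle
  have hae_of_perT : ∀ (P : ℝ → Prop),
      (∀ n : ℕ, ∀ᵐ t ∂(volume.restrict (Ioc (0:ℝ) (n:ℝ))), P t) →
      ∀ᵐ t ∂(volume.restrict (Ici (0:ℝ))), P t := by
    intro P hP
    rw [ae_restrict_iff' measurableSet_Ici]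
    have hn : ∀ n : ℕ, ∀ᵐ t ∂(volume : Measure ℝ), t ∈ Ioc (0:ℝ) (n:ℝ) → P t :=
      fun n => (ae_restrict_iff' measurableSet_Ioc).mp (hP n)
    have h0 : ∀ᵐ t ∂(volume : Measure ℝ), t ≠ (0:ℝ) := by
      rw [ae_iff]
      simp only [ne_eq, not_not, Set.setOf_eq_eq_singleton]
      exact measure_singleton 0
    filter_upwards [ae_all_iff.mpr hn, h0] with t hAll ht0
    intro htIci
    have htpos : 0 < t := lt_of_le_of_ne htIci (Ne.symm ht0)
    obtain ⟨n, hn'⟩ := exists_nat_ge t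
    exact hAll n ⟨htpos, hn'⟩
  refine ⟨⟨hXint, hae_of_perT _ (fun n => hexist n (Nat.cast_nonneg n))⟩, ?_⟩
  -- uniqueness
  intro Y hYint hYae
  apply hae_of_perT
  intro n
  set T := (n : ℝ) with hT_def
  have hT : (0:ℝ) ≤ T := Nat.cast_nonneg n
  set fT := trunc T (mlDensity α γ) with hfT_def
  set RT := trunc T (mlKernel α γ) with hRT_def
  set Z : ℝ → ℝ := fun t => Y t - X t with hZ_def
  have hZIoc : IntegrableOn Z (Ioc 0 T) := by
    have h' : IntegrableOn (fun t => Y t - X t) (Icc 0 T) := (hYint T hT).sub (hXint T hT)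
    exact (h'.mono_set Ioc_subset_Icc_self)
  have hZTi : Integrable (trunc T Z) := integrable_trunc hZIoc
  have hfTi : Integrable fT := integrable_trunc (integrableOn_mlDensity hα0 hα1.le hγ.le hT)
  have hRTi : Integrable RT := integrable_trunc (integrableOn_mlKernel hα0 hα1.le T)
  have hYTi : Integrable (trunc T Y) :=
    integrable_trunc ((hYint T hT).mono_set Ioc_subset_Icc_self)
  have hXTi : Integrable (trunc T X) :=
    integrable_trunc ((hXint T hT).mono_set Ioc_subset_Icc_self)
  have hXae' := hexist T hT
  have hYae' : ∀ᵐ t ∂(volume.restrict (Ioc (0:ℝ) T)), Y t = H t + conv (mlDensity α γ) Y t :=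
    ae_restrict_of_ae_restrict_of_subset (fun t ht => ht.1.le) hYae
  have hEx1 : ∀ᵐ t ∂(volume : Measure ℝ),
      ConvolutionExistsAt fT (trunc T Y) t (ContinuousLinearMap.mul ℝ ℝ) volume :=
    hfTi.ae_convolution_exists _ hYTi
  have hEx2 : ∀ᵐ t ∂(volume : Measure ℝ),
      ConvolutionExistsAt fT (trunc T X) t (ContinuousLinearMap.mul ℝ ℝ) volume :=
    hfTi.ae_convolution_exists _ hXTi
  have hZT_eq : ∀ s, trunc T Z s = trunc T Y s - trunc T X s := by
    intro s
    by_cases hs : s ∈ Ioc (0:ℝ) T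
    · rw [trunc_of_mem hs, trunc_of_mem hs, trunc_of_mem hs]
    · rw [trunc_of_not_mem hs, trunc_of_not_mem hs, trunc_of_not_mem hs]; ring
  have E1 : ∀ᵐ t ∂(volume : Measure ℝ), t ∈ Ioc (0:ℝ) T →
      Z t = (fT ⋆[ContinuousLinearMap.mul ℝ ℝ] trunc T Z) t := by
    have hX'' := (ae_restrict_iff' measurableSet_Ioc).mp hXae'
    have hY'' := (ae_restrict_iff' measurableSet_Ioc).mp hYae'
    filter_upwards [hX'', hY'', hEx1, hEx2] with t hx hy h1 h2
    intro htmem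
    have ht0 : (0:ℝ) ≤ t := htmem.1.le
    have htT : t ≤ T := htmem.2
    have e1 : conv (mlDensity α γ) Y t
        = (fT ⋆[ContinuousLinearMap.mul ℝ ℝ] trunc T Y) t := conv_eq_convolution _ _ ht0 htT
    have e2 : conv (mlDensity α γ) X t
        = (fT ⋆[ContinuousLinearMap.mul ℝ ℝ] trunc T X) t := conv_eq_convolution _ _ ht0 htT
    have h1i : Integrable (fun s => fT s * trunc T Y (t - s)) volume := by
      simpa only [ContinuousLinearMap.mul_apply'] using h1.integrable
    have h2i : Integrable (fun s => fT s * trunc T X (t - s)) volume := by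
      simpa only [ContinuousLinearMap.mul_apply'] using h2.integrable
    have e3 : (fT ⋆[ContinuousLinearMap.mul ℝ ℝ] trunc T Z) t
        = (fT ⋆[ContinuousLinearMap.mul ℝ ℝ] trunc T Y) t
          - (fT ⋆[ContinuousLinearMap.mul ℝ ℝ] trunc T X) t := by
      rw [convolution_def, convolution_def, convolution_def]
      simp only [ContinuousLinearMap.mul_apply']
      rw [← integral_sub h1i h2i]
      apply integral_congr_ae
      apply Filter.Eventually.of_forall
      intro s
      dsimp only
      rw [hZT_eq (t - s)]
      ring
    rw [e3, ← e1, ← e2]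
    show Y t - X t = conv (mlDensity α γ) Y t - conv (mlDensity α γ) X t
    linarith [hx htmem, hy htmem]
  have E1' : trunc T Z =ᵐ[volume]
      trunc T (fT ⋆[ContinuousLinearMap.mul ℝ ℝ] trunc T Z) := by
    filter_upwards [E1] with t h
    by_cases hs : t ∈ Ioc (0:ℝ) T
    · rw [trunc_of_mem hs, trunc_of_mem hs]; exact h hs
    · rw [trunc_of_not_mem hs, trunc_of_not_mem hs]
  have E4 := convolution_assoc_ae RT fT (trunc T Z) hRTi hfTi hZTi
  have E5 : ((RT ⋆[ContinuousLinearMap.mul ℝ ℝ] fT) ⋆[ContinuousLinearMap.mul ℝ ℝ] trunc T Z)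
      = ((fT ⋆[ContinuousLinearMap.mul ℝ ℝ] RT) ⋆[ContinuousLinearMap.mul ℝ ℝ] trunc T Z) := by
    have hc : (RT ⋆[ContinuousLinearMap.mul ℝ ℝ] fT)
        = (fT ⋆[ContinuousLinearMap.mul ℝ ℝ] RT) :=
      funext fun x => convolution_mul_comm RT fT x
    rw [hc]
  have E6 := conv_fR_W hα0 hα1 hγ hT Z hZIoc
  rw [ae_restrict_iff' measurableSet_Ioc]
  filter_upwards [E1, E4, E6] with t h1 h4 h6
  intro htmem
  have htT : t ≤ T := htmem.2
  have c1 : (RT ⋆[ContinuousLinearMap.mul ℝ ℝ] trunc T Z) t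
      = (RT ⋆[ContinuousLinearMap.mul ℝ ℝ]
          (fT ⋆[ContinuousLinearMap.mul ℝ ℝ] trunc T Z)) t := by
    rw [convolution_congr_right RT E1' t,
      convolution_trunc_right_eq (mlKernel α γ) _ htT
        (fun u hu => convolution_trunc_zero_of_nonpos _ _ _ hu)]
  have c2 := h4
  have c3 := congrFun E5 t
  have c4 := h6 htT
  have key : (fT ⋆[ContinuousLinearMap.mul ℝ ℝ] trunc T Z) t = 0 := by
    linarith [c1, c2, c3, c4]
  have hz : Z t = 0 := by rw [h1 htmem, key]
  have : Y t - X t = 0 := by simpa [hZ_def] using hz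
  linarith

end Main
end

section
/- Let α ∈ (0,1) and γ > 0. Then R^{α,γ} is the resolvent of the Mittag-Leffler density f^{α,γ}: for every t > 0, R^{α,γ}(t) = f^{α,γ}(t) + (f^{α,γ} * R^{α,γ})(t), i.e. γ t^{α−1}/Γ(α) = γ t^{α−1} E_{α,α}(−γ t^α) + ∫_0^t f^{α,γ}(t−s) · γ s^{α−1}/Γ(α) ds. -/
open MeasureTheory Real Filter Set

lemma gammaRatio {α z : ℝ} (hα0 : 0 < α) (hα1 : α < 1) (hz : 0 < z) :
    z * Real.Gamma z ≤ Real.Gamma (z + α) * (z + α) ^ (1 - α) := by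
  have hzα : 0 < z + α := by linarith
  have h := Real.Gamma_mul_add_mul_le_rpow_Gamma_mul_rpow_Gamma
    (s := z + α) (t := z + α + 1) hzα (by linarith) hα0 (by linarith : (0:ℝ) < 1 - α)
    (by ring)
  have harg : α * (z + α) + (1 - α) * (z + α + 1) = z + 1 := by ring
  rw [harg, Real.Gamma_add_one hz.ne'] at h
  have h2 : Real.Gamma (z + α + 1) = (z + α) * Real.Gamma (z + α) := Real.Gamma_add_one hzα.ne'
  rw [h2, Real.mul_rpow hzα.le (Real.Gamma_pos_of_pos hzα).le] at h
  calc z * Real.Gamma z ≤ Real.Gamma (z+α) ^ α * ((z+α) ^ (1-α) * Real.Gamma (z+α) ^ (1-α)) := h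
    _ = (Real.Gamma (z+α) ^ α * Real.Gamma (z+α) ^ (1-α)) * (z+α) ^ (1-α) := by ring
    _ = Real.Gamma (z + α) * (z + α) ^ (1 - α) := by
        rw [← Real.rpow_add (Real.Gamma_pos_of_pos hzα)]
        norm_num

lemma mlSummable {α κ : ℝ} (hα0 : 0 < α) (hα1 : α < 1) (hκ : 0 < κ) (x : ℝ) :
    Summable (fun m : ℕ => x ^ m / Real.Gamma (α * m + κ)) := by
  apply summable_of_ratio_norm_eventually_le (r := 1/2) (by norm_num)
  have htend : Tendsto (fun m : ℕ => α * m + κ) atTop atTop := by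
    apply Filter.tendsto_atTop_add_const_right
    exact (tendsto_natCast_atTop_atTop (R := ℝ)).const_mul_atTop hα0
  set M : ℝ := max 1 ((4 * (|x| + 1)) ^ (1/α)) with hM
  filter_upwards [htend.eventually_ge_atTop M] with m hm
  set z : ℝ := α * m + κ with hzdef
  have hz1 : (1:ℝ) ≤ z := le_trans (le_max_left _ _) hm
  have hz : 0 < z := by linarith
  have hzα : 0 < z + α := by linarith
  have hza : α * (m+1 : ℕ) + κ = z + α := by push_cast; ring
  rw [hza]
  have hΓz := Real.Gamma_pos_of_pos hz
  have hΓzα := Real.Gamma_pos_of_pos hzα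
  -- z ^ α ≥ 4 (|x|+1)
  have hzpow : 4 * (|x| + 1) ≤ z ^ α := by
    have h1 : ((4 * (|x| + 1)) ^ (1/α)) ^ α ≤ z ^ α := by
      apply Real.rpow_le_rpow (Real.rpow_nonneg (by positivity) _) _ hα0.le
      exact le_trans (le_max_right _ _) hm
    rwa [← Real.rpow_mul (by positivity : (0:ℝ) ≤ 4 * (|x|+1)),
      one_div, inv_mul_cancel₀ hα0.ne', Real.rpow_one] at h1
  -- key Gamma bound
  have hkey : z * Real.Gamma z ≤ Real.Gamma (z + α) * (z + α) ^ (1 - α) := gammaRatio hα0 hα1 hz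
  have hbound : (z + α) ^ (1 - α) ≤ 2 * z ^ (1 - α) := by
    calc (z + α) ^ (1-α) ≤ (2*z) ^ (1-α) := by
          apply Real.rpow_le_rpow hzα.le (by linarith) (by linarith)
      _ = 2 ^ (1-α) * z ^ (1-α) := Real.mul_rpow (by norm_num) hz.le
      _ ≤ 2 * z ^ (1-α) := by
          have : (2:ℝ) ^ (1-α) ≤ 2 ^ (1:ℝ) := by
            apply Real.rpow_le_rpow_of_exponent_le (by norm_num) (by linarith)
          rw [Real.rpow_one] at this
          have := Real.rpow_nonneg hz.le (1-α)
          nlinarith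
  have hsplit : z ^ α * z ^ (1 - α) = z := by
    rw [← Real.rpow_add hz]; norm_num
  -- show |x| * Gamma z ≤ (1/2) * Gamma (z+α)
  have hmain : |x| * Real.Gamma z ≤ (1/2) * Real.Gamma (z + α) := by
    have hx0 : (0:ℝ) ≤ |x| := abs_nonneg x
    have h3 : z * Real.Gamma z ≤ 2 * (Real.Gamma (z+α) * z ^ (1-α)) := by
      nlinarith [Real.rpow_nonneg hz.le (1-α)]
    -- multiply by |x| and use 4|x| ≤ z^α
    have h4 : 4 * |x| * z ^ (1-α) ≤ z := by
      have : 4 * |x| ≤ z ^ α := by nlinarith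
      nlinarith [Real.rpow_nonneg hz.le (1-α), Real.rpow_nonneg hz.le α]
    nlinarith [Real.rpow_nonneg hz.le (1-α)]
  -- conclude
  have e1 : ‖x ^ (m+1) / Real.Gamma (z + α)‖ = |x| ^ (m+1) / Real.Gamma (z + α) := by
    rw [norm_div, norm_pow, Real.norm_eq_abs, Real.norm_eq_abs, abs_of_pos hΓzα]
  have e2 : ‖x ^ m / Real.Gamma z‖ = |x| ^ m / Real.Gamma z := by
    rw [norm_div, norm_pow, Real.norm_eq_abs, Real.norm_eq_abs, abs_of_pos hΓz]
  rw [e1, e2, div_le_iff₀ hΓzα, pow_succ]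
  have : |x| ^ m * |x| * Real.Gamma z ≤ |x| ^ m * ((1/2) * Real.Gamma (z+α)) := by
    have := mul_le_mul_of_nonneg_left hmain (pow_nonneg (abs_nonneg x) m)
    nlinarith
  calc |x| ^ m * |x| = |x| ^ m * |x| * Real.Gamma z / Real.Gamma z := by
        field_simp
    _ ≤ |x| ^ m * ((1/2) * Real.Gamma (z+α)) / Real.Gamma z := by
        exact (div_le_div_iff_of_pos_right hΓz).mpr this
    _ = 1/2 * (|x| ^ m / Real.Gamma z) * Real.Gamma (z+α) := by ring

lemma betaIntervalIntegrable {p q t : ℝ} (hp : 0 < p) (hq : 0 < q) (ht : 0 < t) :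
    IntervalIntegrable (fun s => (t - s) ^ (p - 1) * s ^ (q - 1)) volume 0 t := by
  have h2 : 0 < t/2 := by linarith
  apply IntervalIntegrable.trans (b := t/2)
  · -- on [0, t/2] : s^(q-1) integrable, (t-s)^(p-1) continuous
    have h1 : IntervalIntegrable (fun s : ℝ => s ^ (q-1)) volume 0 (t/2) :=
      intervalIntegral.intervalIntegrable_rpow' (by linarith)
    have hc : ContinuousOn (fun s : ℝ => (t - s) ^ (p-1)) (Set.uIcc 0 (t/2)) := by
      apply ContinuousOn.rpow_const (by fun_prop)
      intro s hs
      rw [Set.uIcc_of_le h2.le] at hs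
      left
      have := hs.2
      intro h'
      have : s = t := by linarith [sub_eq_zero.mp h']
      linarith [hs.2]
    simpa using h1.continuousOn_mul hc
  · -- on [t/2, t] : (t-s)^(p-1) integrable, s^(q-1) continuous
    have h1 : IntervalIntegrable (fun s : ℝ => s ^ (p-1)) volume 0 (t/2) :=
      intervalIntegral.intervalIntegrable_rpow' (by linarith)
    have h1' := h1.comp_sub_left t
    norm_num at h1'
    have h1'' : IntervalIntegrable (fun s : ℝ => (t - s) ^ (p-1)) volume (t/2) t := by
      have : t - t/2 = t/2 := by ring
      rw [this] at h1'
      exact h1'.symm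
    have hc : ContinuousOn (fun s : ℝ => s ^ (q-1)) (Set.uIcc (t/2) t) := by
      apply ContinuousOn.rpow_const (by fun_prop)
      intro s hs
      rw [Set.uIcc_of_le (by linarith)] at hs
      left; linarith [hs.1]
    exact h1''.mul_continuousOn hc

lemma realBeta {p q t : ℝ} (hp : 0 < p) (hq : 0 < q) (ht : 0 < t) :
    ∫ s in (0:ℝ)..t, (t - s) ^ (p - 1) * s ^ (q - 1) =
      Real.Gamma p * Real.Gamma q / Real.Gamma (p + q) * t ^ (p + q - 1) := by
  have key : ((∫ s in (0:ℝ)..t, (t - s) ^ (p - 1) * s ^ (q - 1) : ℝ) : ℂ) =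
      ∫ s in (0:ℝ)..t, (s : ℂ) ^ ((q:ℂ) - 1) * ((t:ℂ) - s) ^ ((p:ℂ) - 1) := by
    rw [← intervalIntegral.integral_ofReal]
    apply intervalIntegral.integral_congr
    intro s hs
    rw [Set.uIcc_of_le ht.le] at hs
    have hs0 : (0:ℝ) ≤ s := hs.1
    have hst : (0:ℝ) ≤ t - s := by linarith [hs.2]
    push_cast
    rw [Complex.ofReal_cpow hst, Complex.ofReal_cpow hs0]
    push_cast
    ring
  rw [Complex.betaIntegral_scaled ((q:ℂ)) ((p:ℂ)) ht] at key
  have hq' : 0 < Complex.re (q:ℂ) := by simpa using hq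
  have hp' : 0 < Complex.re (p:ℂ) := by simpa using hp
  have hne : Complex.Gamma ((q:ℂ) + (p:ℂ)) ≠ 0 := by
    apply Complex.Gamma_ne_zero_of_re_pos
    simp only [Complex.add_re, Complex.ofReal_re]
    linarith
  have hbeta : Complex.betaIntegral q p =
      Complex.Gamma q * Complex.Gamma p / Complex.Gamma ((q:ℂ) + (p:ℂ)) := by
    rw [eq_div_iff hne]
    rw [Complex.Gamma_mul_Gamma_eq_betaIntegral hq' hp']
    ring
  rw [hbeta] at key
  have hR : ((Real.Gamma p * Real.Gamma q / Real.Gamma (p + q) * t ^ (p + q - 1) : ℝ) : ℂ)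
      = (t:ℂ) ^ ((q:ℂ) + (p:ℂ) - 1) *
        (Complex.Gamma q * Complex.Gamma p / Complex.Gamma ((q:ℂ) + (p:ℂ))) := by
    rw [Complex.ofReal_mul, Complex.ofReal_div, Complex.ofReal_mul,
      Complex.ofReal_cpow ht.le, ← Complex.Gamma_ofReal, ← Complex.Gamma_ofReal,
      ← Complex.Gamma_ofReal]
    push_cast
    ring
  exact Complex.ofReal_inj.mp (key.trans hR.symm)


theorem mlKernel_is_resolvent_of_mlDensity
    (α γ : ℝ) (hα : α ∈ Set.Ioo (0:ℝ) 1) (hγ : 0 < γ) :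
    ∀ t : ℝ, 0 < t →
      γ * t ^ (α - 1) / Real.Gamma α =
        mlDensity α γ t +
          ∫ s in (0:ℝ)..t, mlDensity α γ (t - s) * (γ * s ^ (α - 1) / Real.Gamma α) := by
  obtain ⟨hα0, hα1⟩ := hα
  intro t ht
  have hΓα : 0 < Real.Gamma α := Real.Gamma_pos_of_pos hα0
  set x : ℝ := -γ * t ^ α with hx
  set f : ℕ → ℝ := fun m => x ^ m / Real.Gamma (α * m + α) with hfdef
  have hf : Summable f := mlSummable hα0 hα1 hα0 x
  set g : ℕ → ℝ → ℝ := fun m s =>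
    (γ ^ 2 / Real.Gamma α) * (-γ) ^ m / Real.Gamma (α * m + α) *
      ((t - s) ^ (α * m + α - 1) * s ^ (α - 1)) with hgdef
  have hΓp : ∀ m : ℕ, 0 < Real.Gamma (α * m + α) := fun m =>
    Real.Gamma_pos_of_pos (by positivity)
  -- pointwise expansion of the integrand on Ioo 0 t
  have hpt : ∀ s ∈ Ioo (0:ℝ) t,
      mlDensity α γ (t - s) * (γ * s ^ (α - 1) / Real.Gamma α) = ∑' m, g m s := by
    intro s hs
    have h1 : 0 < t - s := by linarith [hs.2]
    have h2 : 0 < s := hs.1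
    have hterm : ∀ m : ℕ, g m s =
        (γ * (t - s) ^ (α - 1) * (γ * s ^ (α - 1) / Real.Gamma α)) *
          ((-γ * (t - s) ^ α) ^ m / Real.Gamma (α * m + α)) := by
      intro m
      have e1 : (-γ * (t - s) ^ α) ^ m = (-γ) ^ m * (t - s) ^ (α * m) := by
        rw [mul_pow, ← Real.rpow_natCast ((t-s) ^ α) m, ← Real.rpow_mul h1.le]
      have e2 : (t - s) ^ (α * m + α - 1) = (t - s) ^ (α * m) * (t - s) ^ (α - 1) := by
        rw [← Real.rpow_add h1]; ring_nf
      rw [hgdef]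
      simp only []
      rw [e1, e2]
      ring
    rw [tsum_congr hterm, tsum_mul_left, mlDensity, mittagLeffler]
    ring
  -- rewrite the interval integral as an integral over Ioo
  rw [intervalIntegral.integral_of_le ht.le, MeasureTheory.integral_Ioc_eq_integral_Ioo,
    MeasureTheory.setIntegral_congr_fun measurableSet_Ioo hpt]
  -- integrability of each term
  have hint : ∀ m : ℕ, IntegrableOn (g m) (Ioo (0:ℝ) t) volume := by
    intro m
    have hb := betaIntervalIntegrable (p := α * m + α) (q := α) (by positivity) hα0 ht
    have hb' : IntegrableOn (fun s => (t - s) ^ (α * ↑m + α - 1) * s ^ (α - 1))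
        (Ioo (0:ℝ) t) volume := by
      rw [← intervalIntegrable_iff_integrableOn_Ioo_of_le ht.le]
      exact hb
    exact hb'.const_mul _
  -- value of each term's integral
  have hIoo_eq : ∀ (F : ℝ → ℝ), ∫ s in Ioo (0:ℝ) t, F s = ∫ s in (0:ℝ)..t, F s := by
    intro F
    rw [intervalIntegral.integral_of_le ht.le, MeasureTheory.integral_Ioc_eq_integral_Ioo]
  have hval : ∀ m : ℕ, ∫ s in Ioo (0:ℝ) t, g m s =
      (γ ^ 2 / Real.Gamma α) * (-γ) ^ m / Real.Gamma (α * m + α) *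
        (Real.Gamma (α * m + α) * Real.Gamma α / Real.Gamma (α * m + α + α) *
          t ^ (α * m + α + α - 1)) := by
    intro m
    rw [hgdef]
    simp only []
    rw [MeasureTheory.integral_const_mul, hIoo_eq,
      realBeta (by positivity : (0:ℝ) < α * m + α) hα0 ht]
  -- norm integrals and their summability
  have hnorm : ∀ m : ℕ, ∫ s in Ioo (0:ℝ) t, ‖g m s‖ =
      (γ ^ 2 / Real.Gamma α) * γ ^ m / Real.Gamma (α * m + α) *
        (Real.Gamma (α * m + α) * Real.Gamma α / Real.Gamma (α * m + α + α) *
          t ^ (α * m + α + α - 1)) := by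
    intro m
    have : ∀ s ∈ Ioo (0:ℝ) t, ‖g m s‖ =
        (γ ^ 2 / Real.Gamma α) * γ ^ m / Real.Gamma (α * m + α) *
          ((t - s) ^ (α * m + α - 1) * s ^ (α - 1)) := by
      intro s hs
      have h1 : 0 < t - s := by linarith [hs.2]
      have h2 : 0 < s := hs.1
      rw [hgdef]
      simp only []
      simp only [Real.norm_eq_abs, abs_mul, abs_div, abs_pow, abs_neg,
        abs_of_pos hγ, abs_of_pos hΓα, abs_of_pos (hΓp m),
        abs_of_pos (Real.rpow_pos_of_pos h1 _), abs_of_pos (Real.rpow_pos_of_pos h2 _)]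
    rw [MeasureTheory.setIntegral_congr_fun measurableSet_Ioo this,
      MeasureTheory.integral_const_mul, hIoo_eq,
      realBeta (by positivity : (0:ℝ) < α * m + α) hα0 ht]
  have hsum : Summable fun m : ℕ => ∫ s in Ioo (0:ℝ) t, ‖g m s‖ := by
    apply Summable.congr (f := fun m : ℕ =>
      (γ ^ 2 * Real.Gamma α / Real.Gamma α * t ^ (2*α - 1)) *
        ((γ * t ^ α) ^ m / Real.Gamma (α * m + 2*α)))
    · exact ((mlSummable hα0 hα1 (by positivity) (γ * t ^ α)).mul_left _)
    · intro m
      rw [hnorm m]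
      have e1 : (γ * t ^ α) ^ m = γ ^ m * t ^ (α * m) := by
        rw [mul_pow, ← Real.rpow_natCast (t ^ α) m, ← Real.rpow_mul ht.le]
      have e2 : t ^ (α * m + α + α - 1) = t ^ (α * m) * t ^ (2*α - 1) := by
        rw [← Real.rpow_add ht]; ring_nf
      have e3 : Real.Gamma (α * m + 2*α) = Real.Gamma (α * m + α + α) := by
        congr 1; ring
      rw [e1, e2, e3]
      field_simp
  -- swap sum and integral
  rw [← MeasureTheory.integral_tsum_of_summable_integral_norm hint hsum]
  -- compute the resulting sum
  have hterm2 : ∀ m : ℕ, ∫ s in Ioo (0:ℝ) t, g m s = -(γ * t ^ (α - 1)) * f (m + 1) := by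
    intro m
    rw [hval m, hfdef]
    simp only []
    have e0 : Real.Gamma (α * ((m:ℕ)+1 : ℕ) + α) = Real.Gamma (α * m + α + α) := by
      congr 1; push_cast; ring
    have e1 : x ^ (m+1) = -((-γ) ^ m * γ * (t ^ α) ^ (m+1)) := by
      rw [hx]; ring
    have e2 : (t ^ α) ^ (m+1 : ℕ) = t ^ (α * m + α) := by
      rw [← Real.rpow_natCast (t ^ α) (m+1), ← Real.rpow_mul ht.le]
      congr 1; push_cast; ring
    have e3 : t ^ (α * m + α + α - 1) = t ^ (α * m + α) * t ^ (α - 1) := by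
      rw [← Real.rpow_add ht]; ring_nf
    rw [e0, e1, e2, e3]
    have := (hΓp m).ne'
    have h2 : Real.Gamma (α * m + α + α) ≠ 0 :=
      (Real.Gamma_pos_of_pos (by positivity)).ne'
    field_simp
  rw [tsum_congr hterm2, tsum_mul_left]
  -- Mittag-Leffler expansion
  have hE : mittagLeffler α α x = 1 / Real.Gamma α + ∑' m, f (m + 1) := by
    rw [mittagLeffler]
    rw [show (∑' m : ℕ, x ^ m / Real.Gamma (α * m + α)) = ∑' m, f m from rfl]
    rw [Summable.tsum_eq_zero_add hf]
    congr 1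
    rw [hfdef]
    norm_num
  rw [mlDensity, ← hx, hE]
  ring
end

section
/- Let α ∈ (1/2,1), σ > 0 and φ(t) = ασ(1+σt)^{-(α+1)}. For every t ≥ 0, the series ∑_{k=1}^∞ φ^{*k}(t) of convolution powers of φ converges to a finite value R_α(t). -/
open MeasureTheory Real Filter Set

theorem convolution_power_series_summable
    (α σ : ℝ) (hα : α ∈ Set.Ioo (1/2 : ℝ) 1) (hσ : 0 < σ)
    (φ : ℝ → ℝ) (hφ : ∀ t : ℝ, φ t = α * σ * (1 + σ * t) ^ (-(α + 1))) :
    ∀ t : ℝ, 0 ≤ t → Summable (fun k : ℕ => convPow φ k t) := by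
  obtain ⟨hα1, hα2⟩ := hα
  have hα0 : 0 < α := lt_trans (by norm_num) hα1
  have hc : 0 < α * σ := mul_pos hα0 hσ
  -- key bound on φ
  have hφ_bound : ∀ u : ℝ, 0 ≤ u → |φ u| ≤ α * σ := by
    intro u hu
    rw [hφ u]
    have hb : (1 : ℝ) ≤ 1 + σ * u := by nlinarith
    have h1 : (0:ℝ) ≤ (1 + σ * u) ^ (-(α + 1)) := Real.rpow_nonneg (by linarith) _
    have h2 : (1 + σ * u) ^ (-(α + 1)) ≤ 1 :=
      Real.rpow_le_one_of_one_le_of_nonpos hb (by linarith)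
    rw [abs_of_nonneg (by positivity)]
    nlinarith
  -- main induction: |convPow φ k s| ≤ (ασ) * (ασ s)^k / k!
  have key : ∀ k : ℕ, ∀ s : ℝ, 0 ≤ s →
      |convPow φ k s| ≤ α * σ * (α * σ * s) ^ k / (Nat.factorial k) := by
    intro k
    induction k with
    | zero =>
      intro s hs
      simpa [convPow] using hφ_bound s hs
    | succ k ih =>
      intro t ht
      have hg : IntervalIntegrable
          (fun u : ℝ => α * σ * (α * σ * (α * σ * u) ^ k / (Nat.factorial k))) volume 0 t :=
        (Continuous.intervalIntegrable (by continuity) 0 t)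
      have hbd : ∀ᵐ u ∂(volume.restrict (Set.uIoc (0:ℝ) t)), ‖φ (t - u) * convPow φ k u‖ ≤
          α * σ * (α * σ * (α * σ * u) ^ k / (Nat.factorial k)) := by
        refine (ae_restrict_iff' measurableSet_uIoc).mpr (ae_of_all _ ?_)
        intro u hu
        rw [Set.uIoc_of_le ht] at hu
        obtain ⟨hu0, hut⟩ := hu
        have h1 : |φ (t - u)| ≤ α * σ := hφ_bound _ (by linarith)
        have h2 : |convPow φ k u| ≤ α * σ * (α * σ * u) ^ k / (Nat.factorial k) :=
          ih u hu0.le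
        rw [norm_mul, Real.norm_eq_abs, Real.norm_eq_abs]
        have h3 : (0:ℝ) ≤ |φ (t - u)| := abs_nonneg _
        have h4 : (0:ℝ) ≤ |convPow φ k u| := abs_nonneg _
        calc |φ (t - u)| * |convPow φ k u|
            ≤ (α * σ) * (α * σ * (α * σ * u) ^ k / (Nat.factorial k)) :=
              mul_le_mul h1 h2 h4 hc.le
          _ = _ := rfl
      have hmain : |convPow φ (k+1) t| ≤
          |∫ u in (0:ℝ)..t, α * σ * (α * σ * (α * σ * u) ^ k / (Nat.factorial k))| := by
        show |conv φ (convPow φ k) t| ≤ _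
        unfold conv
        exact intervalIntegral.norm_integral_le_abs_of_norm_le hbd hg
      refine hmain.trans ?_
      have hval : (∫ u in (0:ℝ)..t, α * σ * (α * σ * (α * σ * u) ^ k / (Nat.factorial k)))
          = α * σ * (α * σ * t) ^ (k+1) / (Nat.factorial (k+1)) := by
        have : ∀ u : ℝ, α * σ * (α * σ * (α * σ * u) ^ k / (Nat.factorial k))
            = ((α * σ)^(k+2) / (Nat.factorial k)) * u ^ k := by
          intro u; rw [mul_pow]; ring
        simp_rw [this]
        rw [intervalIntegral.integral_const_mul, integral_pow]
        have hfk : (Nat.factorial k : ℝ) ≠ 0 := Nat.cast_ne_zero.mpr (Nat.factorial_ne_zero k)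
        have hk1 : ((k:ℝ) + 1) ≠ 0 := by positivity
        rw [Nat.factorial_succ]
        push_cast
        field_simp
        ring
      rw [hval, abs_of_nonneg (by positivity)]
  -- summability by comparison with the exponential series
  intro t ht
  refine Summable.of_norm_bounded
    (g := fun k : ℕ => α * σ * ((α * σ * t) ^ k / (Nat.factorial k))) ?_ ?_
  · exact (Real.summable_pow_div_factorial (α * σ * t)).mul_left (α * σ)
  · intro k
    have := key k t ht
    rw [Real.norm_eq_abs]
    calc |convPow φ k t| ≤ α * σ * (α * σ * t) ^ k / (Nat.factorial k) := this
      _ = α * σ * ((α * σ * t) ^ k / (Nat.factorial k)) := by ring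
end

section
/- Let α ∈ (1/2,1), σ > 0 and φ(t) = ασ(1+σt)^{-(α+1)}. Then for every λ > 0, lim_{n→∞} n^α ( 1 − L_φ(λ/n) ) = Γ(1−α) λ^α / σ^α, where L_φ(μ) = ∫_0^∞ e^{−μt} φ(t) dt. -/
open MeasureTheory Real Filter Set

/-- The Laplace transform `L_f(l) = ∫_0^∞ e^{-l t} f(t) dt`. -/
noncomputable def laplace (f : ℝ → ℝ) (l : ℝ) : ℝ := ∫ t in Set.Ioi (0:ℝ), Real.exp (-(l * t)) * f t

section Aux

variable {α σ : ℝ}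

lemma aux_contOn (hα : 0 < α) (hσ : 0 < σ) (μ β : ℝ) :
    ContinuousOn (fun t : ℝ => Real.exp (-(μ * t)) * (1 + σ * t) ^ (-β)) (Set.Ici (0:ℝ)) := by
  apply ContinuousOn.mul
  · exact (Real.continuous_exp.comp (continuous_const.mul continuous_id).neg).continuousOn
  · refine ContinuousOn.rpow_const (by fun_prop) fun x hx => Or.inl ?_
    have hx' : (0:ℝ) ≤ x := hx
    nlinarith

lemma aux_integrableOn (hα : 0 < α) (hσ : 0 < σ) {μ : ℝ} (hμ : 0 < μ) {β : ℝ} (hβ : 0 ≤ β) :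
    IntegrableOn (fun t : ℝ => Real.exp (-(μ * t)) * (1 + σ * t) ^ (-β)) (Set.Ioi (0:ℝ)) := by
  have hexp : IntegrableOn (fun t : ℝ => Real.exp (-μ * t)) (Set.Ioi (0:ℝ)) :=
    exp_neg_integrableOn_Ioi 0 hμ
  refine hexp.mono' (((aux_contOn hα hσ μ β).mono Ioi_subset_Ici_self).aestronglyMeasurable
    measurableSet_Ioi) ?_
  rw [ae_restrict_iff' measurableSet_Ioi]
  filter_upwards with t ht
  have ht' : (0:ℝ) < t := ht
  have h1 : (0:ℝ) < 1 + σ * t := by nlinarith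
  have h2 : (1 + σ * t) ^ (-β) ≤ 1 :=
    Real.rpow_le_one_of_one_le_of_nonpos (by nlinarith) (by linarith)
  have h3 : (0:ℝ) ≤ (1 + σ * t) ^ (-β) := (Real.rpow_pos_of_pos h1 _).le
  rw [Real.norm_eq_abs, abs_of_nonneg (by positivity)]
  calc Real.exp (-(μ * t)) * (1 + σ * t) ^ (-β) ≤ Real.exp (-(μ * t)) * 1 := by
        exact mul_le_mul_of_nonneg_left h2 (Real.exp_pos _).le
    _ = Real.exp (-μ * t) := by rw [mul_one, neg_mul]

/-- Key identity: `1 - L_φ(μ) = μ ∫_0^∞ e^{-μ t} (1+σ t)^{-α} dt`. -/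
lemma key_identity (hα : 0 < α) (hα1 : α < 1) (hσ : 0 < σ)
    (φ : ℝ → ℝ) (hφ : ∀ t : ℝ, φ t = α * σ * (1 + σ * t) ^ (-(α + 1)))
    {μ : ℝ} (hμ : 0 < μ) :
    1 - laplace φ μ
      = μ * ∫ t in Set.Ioi (0:ℝ), Real.exp (-(μ * t)) * (1 + σ * t) ^ (-α) := by
  set f : ℝ → ℝ := fun t => -(Real.exp (-(μ * t)) * (1 + σ * t) ^ (-α)) with hf
  set g1 : ℝ → ℝ := fun t => μ * (Real.exp (-(μ * t)) * (1 + σ * t) ^ (-α)) with hg1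
  set g2 : ℝ → ℝ := fun t => Real.exp (-(μ * t)) * (α * σ * (1 + σ * t) ^ (-(α + 1))) with hg2
  have hderiv : ∀ t ∈ Set.Ici (0:ℝ), HasDerivAt f (g1 t + g2 t) t := by
    intro t ht
    have ht' : (0:ℝ) ≤ t := ht
    have hpos : (0:ℝ) < 1 + σ * t := by nlinarith
    have h1 : HasDerivAt (fun t : ℝ => -(μ * t)) (-μ) t := by
      simpa using (hasDerivAt_id t).const_mul (-μ)
    have h2 : HasDerivAt (fun t : ℝ => Real.exp (-(μ * t))) (Real.exp (-(μ * t)) * (-μ)) t :=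
      (Real.hasDerivAt_exp _).comp t h1
    have h3 : HasDerivAt (fun t : ℝ => 1 + σ * t) σ t := by
      simpa using ((hasDerivAt_id t).const_mul σ).const_add 1
    have h4 : HasDerivAt (fun t : ℝ => (1 + σ * t) ^ (-α))
        ((-α) * (1 + σ * t) ^ (-α - 1) * σ) t :=
      by convert h3.rpow_const (p := -α) (Or.inl hpos.ne') using 1; ring
    have h5 : HasDerivAt f _ t := (h2.mul h4).neg
    convert h5 using 1
    have he : -α - 1 = -(α + 1) := by ring
    rw [he] at *
    simp only [hg1, hg2]
    ring
  have hint1 : IntegrableOn g1 (Set.Ioi (0:ℝ)) := by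
    exact (aux_integrableOn hα hσ hμ hα.le).const_mul μ
  have hint2 : IntegrableOn g2 (Set.Ioi (0:ℝ)) := by
    have h : IntegrableOn
        (fun t : ℝ => α * σ * (Real.exp (-(μ * t)) * (1 + σ * t) ^ (-(α + 1))))
        (Set.Ioi (0:ℝ)) :=
      (aux_integrableOn hα hσ hμ (by linarith : (0:ℝ) ≤ α + 1)).const_mul (α * σ)
    refine h.congr_fun (fun t _ => ?_) measurableSet_Ioi
    simp only [hg2]; ring
  have hint : IntegrableOn (fun t => g1 t + g2 t) (Set.Ioi (0:ℝ)) := hint1.add hint2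
  have htend : Tendsto f atTop (nhds 0) := by
    have hbig : Tendsto (fun t : ℝ => Real.exp (-(μ * t))) atTop (nhds 0) := by
      have : Tendsto (fun t : ℝ => -(μ * t)) atTop atBot := by
        apply tendsto_neg_atTop_atBot.comp
        exact Tendsto.const_mul_atTop hμ tendsto_id
      exact Real.tendsto_exp_atBot.comp this
    rw [show (0:ℝ) = -0 by norm_num]
    apply Tendsto.neg
    apply squeeze_zero' (g := fun t : ℝ => Real.exp (-(μ * t)))
    · filter_upwards [eventually_ge_atTop (0:ℝ)] with t ht
      positivity
    · filter_upwards [eventually_ge_atTop (0:ℝ)] with t ht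
      have hpos : (0:ℝ) < 1 + σ * t := by nlinarith
      have h2 : (1 + σ * t) ^ (-α) ≤ 1 :=
        Real.rpow_le_one_of_one_le_of_nonpos (by nlinarith) (by linarith)
      calc Real.exp (-(μ * t)) * (1 + σ * t) ^ (-α) ≤ Real.exp (-(μ * t)) * 1 :=
            mul_le_mul_of_nonneg_left h2 (Real.exp_pos _).le
        _ = Real.exp (-(μ * t)) := mul_one _
    · exact hbig
  have hFTC := integral_Ioi_of_hasDerivAt_of_tendsto'
    (f := f) (f' := fun t => g1 t + g2 t) (a := 0) hderiv hint htend
  have hf0 : f 0 = -1 := by simp [hf]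
  rw [hf0] at hFTC
  have hsplit : ∫ t in Set.Ioi (0:ℝ), (g1 t + g2 t)
      = (∫ t in Set.Ioi (0:ℝ), g1 t) + ∫ t in Set.Ioi (0:ℝ), g2 t :=
    integral_add hint1 hint2
  have hI1 : ∫ t in Set.Ioi (0:ℝ), g1 t
      = μ * ∫ t in Set.Ioi (0:ℝ), Real.exp (-(μ * t)) * (1 + σ * t) ^ (-α) := by
    simp only [hg1]; exact integral_const_mul μ _
  have hI2 : ∫ t in Set.Ioi (0:ℝ), g2 t = laplace φ μ := by
    unfold laplace
    refine setIntegral_congr_fun measurableSet_Ioi fun t _ => ?_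
    rw [hφ t]
  rw [hsplit, hI1, hI2] at hFTC
  linarith

end Aux

theorem asymptotics_of_laplace_transform_of_kernel
    (α σ : ℝ) (hα : α ∈ Set.Ioo (1/2 : ℝ) 1) (hσ : 0 < σ)
    (φ : ℝ → ℝ) (hφ : ∀ t : ℝ, φ t = α * σ * (1 + σ * t) ^ (-(α + 1))) :
    ∀ l : ℝ, 0 < l →
      Tendsto (fun n : ℕ => (n : ℝ) ^ α * (1 - laplace φ (l / (n : ℝ))))
        atTop (nhds (Real.Gamma (1 - α) * l ^ α / σ ^ α)) := by
  obtain ⟨hα2, hα1⟩ := hα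
  have hα0 : 0 < α := by linarith
  intro l hl
  -- the limiting integrand and its integral
  set bd : ℝ → ℝ := fun u => Real.exp (-(l * u)) * (σ * u) ^ (-α) with hbd
  have hbd_int : IntegrableOn bd (Set.Ioi (0:ℝ)) := by
    have h0 : IntegrableOn (fun x : ℝ => x ^ (-α) * Real.exp (-l * x ^ (1:ℝ))) (Set.Ioi (0:ℝ)) :=
      integrableOn_rpow_mul_exp_neg_mul_rpow (by linarith) one_pos hl
    have h1 : IntegrableOn (fun x : ℝ => σ ^ (-α) * (x ^ (-α) * Real.exp (-l * x ^ (1:ℝ))))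
        (Set.Ioi (0:ℝ)) := h0.const_mul (σ ^ (-α))
    refine h1.congr_fun (fun u hu => ?_) measurableSet_Ioi
    have hu' : (0:ℝ) < u := hu
    show σ ^ (-α) * (u ^ (-α) * Real.exp (-l * u ^ (1:ℝ))) = Real.exp (-(l * u)) * (σ * u) ^ (-α)
    rw [Real.mul_rpow hσ.le hu'.le, Real.rpow_one]
    ring_nf
  -- value of the limit integral
  have hval : ∫ u in Set.Ioi (0:ℝ), bd u = σ ^ (-α) * ((1 / l) ^ (1 - α) * Real.Gamma (1 - α)) := by
    have h0 : ∫ u in Set.Ioi (0:ℝ), u ^ ((1 - α) - 1) * Real.exp (-(l * u))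
        = (1 / l) ^ (1 - α) * Real.Gamma (1 - α) :=
      integral_rpow_mul_exp_neg_mul_Ioi (by linarith) hl
    rw [← h0, ← integral_const_mul]
    refine setIntegral_congr_fun measurableSet_Ioi fun u hu => ?_
    have hu' : (0:ℝ) < u := hu
    show Real.exp (-(l * u)) * (σ * u) ^ (-α) = σ ^ (-α) * (u ^ ((1:ℝ) - α - 1) * Real.exp (-(l * u)))
    rw [Real.mul_rpow hσ.le hu'.le, show (1:ℝ) - α - 1 = -α from by ring]
    ring
  -- the sequence of integrals converging by dominated convergence
  set F : ℕ → ℝ → ℝ := fun n u => Real.exp (-(l * u)) * ((n:ℝ)⁻¹ + σ * u) ^ (-α) with hF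
  have hDCT : Tendsto (fun n => ∫ u in Set.Ioi (0:ℝ), F n u) atTop
      (nhds (∫ u in Set.Ioi (0:ℝ), bd u)) := by
    apply tendsto_integral_of_dominated_convergence bd
    · intro n
      apply ContinuousOn.aestronglyMeasurable _ measurableSet_Ioi
      apply ContinuousOn.mul
      · exact (Real.continuous_exp.comp (continuous_const.mul continuous_id).neg).continuousOn
      · refine ContinuousOn.rpow_const (by fun_prop) fun x hx => Or.inl ?_
        have hx' : (0:ℝ) < x := hx
        have : (0:ℝ) < (n:ℝ)⁻¹ + σ * x := by positivity
        exact this.ne'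
    · exact hbd_int
    · intro n
      rw [ae_restrict_iff' measurableSet_Ioi]
      filter_upwards with u hu
      have hu' : (0:ℝ) < u := hu
      have hσu : (0:ℝ) < σ * u := by positivity
      have hle : σ * u ≤ (n:ℝ)⁻¹ + σ * u := by
        have : (0:ℝ) ≤ (n:ℝ)⁻¹ := by positivity
        linarith
      have h2 : ((n:ℝ)⁻¹ + σ * u) ^ (-α) ≤ (σ * u) ^ (-α) :=
        Real.rpow_le_rpow_of_nonpos hσu hle (by linarith)
      have hpos : (0:ℝ) < (n:ℝ)⁻¹ + σ * u := by positivity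
      rw [Real.norm_eq_abs, abs_of_nonneg (by positivity)]
      exact mul_le_mul_of_nonneg_left h2 (Real.exp_pos _).le
    · rw [ae_restrict_iff' measurableSet_Ioi]
      filter_upwards with u hu
      have hu' : (0:ℝ) < u := hu
      have hσu : (0:ℝ) < σ * u := by positivity
      have h1 : Tendsto (fun n : ℕ => ((n:ℝ)⁻¹ + σ * u)) atTop (nhds (σ * u)) := by
        have := (tendsto_inv_atTop_zero (𝕜 := ℝ)).comp (tendsto_natCast_atTop_atTop (R := ℝ))
        simpa [Function.comp] using this.add_const (σ * u)
      have h2 : Tendsto (fun n : ℕ => ((n:ℝ)⁻¹ + σ * u) ^ (-α)) atTop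
          (nhds ((σ * u) ^ (-α))) :=
        ((Real.continuousAt_rpow_const _ _ (Or.inl hσu.ne')).tendsto).comp h1
      simpa [hF, hbd] using h2.const_mul (Real.exp (-(l * u)))
  have hlim : Tendsto (fun n => l * ∫ u in Set.Ioi (0:ℝ), F n u) atTop
      (nhds (Real.Gamma (1 - α) * l ^ α / σ ^ α)) := by
    have := hDCT.const_mul l
    convert this using 2
    rw [hval]
    have hσα : (0:ℝ) < σ ^ α := Real.rpow_pos_of_pos hσ _
    have hlα : (0:ℝ) < l ^ (1 - α) := Real.rpow_pos_of_pos hl _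
    rw [Real.rpow_neg hσ.le, one_div, Real.inv_rpow hl.le]
    have hls : l ^ α * l ^ (1 - α) = l := by
      rw [← Real.rpow_add hl]; norm_num
    field_simp
    linear_combination hls
  -- eventual equality of the two sequences
  refine Tendsto.congr' ?_ hlim
  filter_upwards [eventually_ge_atTop 1] with n hn
  have hN : (0:ℝ) < (n:ℝ) := by exact_mod_cast Nat.lt_of_lt_of_le Nat.zero_lt_one hn
  set N : ℝ := (n:ℝ)
  have hμ : 0 < l / N := by positivity
  have hid := key_identity hα0 hα1 hσ φ hφ hμ
  -- substitution t = N u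
  have hsub := integral_comp_mul_left_Ioi
    (fun x => Real.exp (-(l / N * x)) * (1 + σ * x) ^ (-α)) 0 hN
  rw [mul_zero] at hsub
  have hsub' : ∫ t in Set.Ioi (0:ℝ), Real.exp (-(l / N * t)) * (1 + σ * t) ^ (-α)
      = N * ∫ u in Set.Ioi (0:ℝ), Real.exp (-(l * u)) * (1 + σ * (N * u)) ^ (-α) := by
    have heq : ∀ u : ℝ, Real.exp (-(l / N * (N * u))) * (1 + σ * (N * u)) ^ (-α)
        = Real.exp (-(l * u)) * (1 + σ * (N * u)) ^ (-α) := by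
      intro u
      have h : l / N * (N * u) = l * u := by field_simp
      rw [h]
    simp only [heq] at hsub
    rw [smul_eq_mul] at hsub
    rw [hsub]
    rw [← mul_assoc, mul_inv_cancel₀ hN.ne', one_mul]
  -- pull N^α inside
  have hpull : N ^ α * ∫ u in Set.Ioi (0:ℝ), Real.exp (-(l * u)) * (1 + σ * (N * u)) ^ (-α)
      = ∫ u in Set.Ioi (0:ℝ), F n u := by
    rw [← integral_const_mul]
    refine setIntegral_congr_fun measurableSet_Ioi fun u hu => ?_
    have hu' : (0:ℝ) < u := hu
    have hNpos : (0:ℝ) < 1 + σ * (N * u) := by positivity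
    have hbase : N⁻¹ + σ * u = N⁻¹ * (1 + σ * (N * u)) := by
      field_simp
    have hNα : (N⁻¹ : ℝ) ^ (-α) = N ^ α := by
      rw [Real.inv_rpow hN.le, Real.rpow_neg hN.le, inv_inv]
    simp only [hF]
    rw [hbase, Real.mul_rpow (by positivity) hNpos.le, hNα]
    ring
  -- final computation
  show l * (∫ u in Set.Ioi (0:ℝ), F n u) = N ^ α * (1 - laplace φ (l / N))
  rw [hid, hsub', ← hpull]
  have hNα : (0:ℝ) < N ^ α := Real.rpow_pos_of_pos hN _
  rw [← mul_assoc (l / N), div_mul_cancel₀ l hN.ne']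
  ring
end

section
/- Let α ∈ (1/2,1), σ > 0, φ(t) = ασ(1+σt)^{-(α+1)} with tail Φ̄(t) = (1+σt)^{-α}, let ζ ∈ (0,1) and let R_ζ(t) = ∑_{k=1}^∞ ζ^k φ^{*k}(t). Then for every t ≥ 0: Φ̄(t) + (Φ̄ * R_ζ)(t) = ((1−ζ)/ζ) ∫_t^∞ R_ζ(s) ds. -/
open MeasureTheory Real Filter Set

lemma convPow_succ (f : ℝ → ℝ) (k : ℕ) : convPow f (k+1) = conv f (convPow f k) := rfl

lemma conv_eq_swap (f g : ℝ → ℝ) (x : ℝ) :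
    conv f g x = ∫ t in (0:ℝ)..x, g t * f (x - t) :=
  intervalIntegral.integral_congr (fun s _ => mul_comm _ _)

lemma indicator_conv (f g : ℝ → ℝ) :
    indicator (Ioi 0) (conv f g) =
      posConvolution g f (ContinuousLinearMap.mul ℝ ℝ) volume := by
  unfold posConvolution
  ext x
  by_cases hx : x ∈ Ioi (0:ℝ)
  · rw [indicator_of_mem hx, indicator_of_mem hx, conv_eq_swap]
    simp
  · rw [indicator_of_notMem hx, indicator_of_notMem hx]

section Aux
variable {α σ : ℝ} (hα : α ∈ Set.Ioo (1/2 : ℝ) 1) (hσ : 0 < σ)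
variable {φ : ℝ → ℝ} (hφ : ∀ t : ℝ, φ t = α * σ * (1 + σ * t) ^ (-(α + 1)))

include hα hσ hφ

lemma phi_deriv {x : ℝ} (hx : 0 ≤ x) :
    HasDerivAt (fun y : ℝ => -(1 + σ * y) ^ (-α)) (φ x) x := by
  have hb : (0:ℝ) < 1 + σ * x := by nlinarith
  have h1 : HasDerivAt (fun y : ℝ => 1 + σ * y) σ x := by
    simpa using ((hasDerivAt_id x).const_mul σ).const_add 1
  have h2 : HasDerivAt (fun y : ℝ => y ^ (-α)) (-α * (1 + σ * x) ^ (-α - 1)) (1 + σ * x) :=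
    Real.hasDerivAt_rpow_const (Or.inl hb.ne')
  have h3 := (h2.comp x h1).neg
  refine h3.congr_deriv ?_
  rw [hφ, show -(α+1) = -α - 1 by ring]
  ring

lemma phi_nonneg {x : ℝ} (hx : 0 ≤ x) : 0 ≤ φ x := by
  have hb : (0:ℝ) < 1 + σ * x := by nlinarith
  rw [hφ]
  have := Real.rpow_nonneg hb.le (-(α+1))
  have hα0 : (0:ℝ) < α := lt_trans (by norm_num) hα.1
  positivity

lemma phi_contOn : ContinuousOn φ (Ici 0) := by
  have : ContinuousOn (fun t : ℝ => α * σ * (1 + σ * t) ^ (-(α + 1))) (Ici 0) := by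
    apply ContinuousOn.mul continuousOn_const
    apply ContinuousOn.rpow_const
    · exact (continuous_const.add (continuous_const.mul continuous_id)).continuousOn
    · intro x hx
      have : (0:ℝ) < 1 + σ * x := by have := hx.out; nlinarith
      exact Or.inl this.ne'
  exact this.congr (fun x _ => hφ x)

lemma phi_ftc {x : ℝ} (hx : 0 ≤ x) :
    ∫ u in (0:ℝ)..x, φ u = 1 - (1 + σ * x) ^ (-α) := by
  have hint : IntervalIntegrable φ volume 0 x := by
    apply ContinuousOn.intervalIntegrable
    apply (phi_contOn hα hσ hφ).mono
    rw [uIcc_of_le hx]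
    exact fun y hy => hy.1
  have := intervalIntegral.integral_eq_sub_of_hasDerivAt
    (f := fun y : ℝ => -(1 + σ * y) ^ (-α)) (f' := φ)
    (fun y hy => phi_deriv hα hσ hφ (by rw [uIcc_of_le hx] at hy; exact hy.1)) hint
  rw [this]
  simp [Real.one_rpow]
  ring

lemma phi_tendsto : Tendsto (fun y : ℝ => -(1 + σ * y) ^ (-α)) atTop (nhds 0) := by
  have hα0 : (0:ℝ) < α := lt_trans (by norm_num) hα.1
  have h1 : Tendsto (fun y : ℝ => 1 + σ * y) atTop atTop :=
    tendsto_atTop_add_const_left _ 1 (tendsto_id.const_mul_atTop hσ)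
  have h2 : Tendsto (fun y : ℝ => (1 + σ * y) ^ (-α)) atTop (nhds 0) :=
    (tendsto_rpow_neg_atTop hα0).comp h1
  simpa using h2.neg

lemma phi_integrableOn : IntegrableOn φ (Ioi (0:ℝ)) := by
  apply integrableOn_Ioi_deriv_of_nonneg
    (g := fun y : ℝ => -(1 + σ * y) ^ (-α)) (l := 0)
  · exact (phi_deriv hα hσ hφ le_rfl).continuousAt.continuousWithinAt
  · exact fun x hx => phi_deriv hα hσ hφ (le_of_lt hx)
  · exact fun x hx => phi_nonneg hα hσ hφ (le_of_lt hx)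
  · exact phi_tendsto hα hσ hφ

lemma phi_integral_Ioi : ∫ x in Ioi (0:ℝ), φ x = 1 := by
  have := integral_Ioi_of_hasDerivAt_of_nonneg
    (g := fun y : ℝ => -(1 + σ * y) ^ (-α)) (l := 0) (a := 0)
    (phi_deriv hα hσ hφ le_rfl).continuousAt.continuousWithinAt
    (fun x hx => phi_deriv hα hσ hφ (le_of_lt hx))
    (fun x hx => phi_nonneg hα hσ hφ (le_of_lt hx))
    (phi_tendsto hα hσ hφ)
  rw [this]
  simp [Real.one_rpow]

end Aux

section Conv
variable {α σ : ℝ} (hα : α ∈ Set.Ioo (1/2 : ℝ) 1) (hσ : 0 < σ)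
variable {φ : ℝ → ℝ} (hφ : ∀ t : ℝ, φ t = α * σ * (1 + σ * t) ^ (-(α + 1)))
include hα hσ hφ

lemma convPow_props (k : ℕ) :
    IntegrableOn (convPow φ k) (Ioi (0:ℝ)) ∧ (∫ x in Ioi (0:ℝ), convPow φ k x) = 1 ∧
      ∀ x ∈ Ioi (0:ℝ), 0 ≤ convPow φ k x := by
  induction k with
  | zero =>
      exact ⟨phi_integrableOn hα hσ hφ, phi_integral_Ioi hα hσ hφ,
        fun x hx => phi_nonneg hα hσ hφ (le_of_lt hx)⟩
  | succ k ih =>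
      obtain ⟨hI, hInt, hNN⟩ := ih
      have hφI := phi_integrableOn hα hσ hφ
      rw [convPow_succ]
      have hInd : Integrable (indicator (Ioi 0) (conv φ (convPow φ k))) volume := by
        rw [indicator_conv]
        exact integrable_posConvolution hI hφI (ContinuousLinearMap.mul ℝ ℝ)
      refine ⟨?_, ?_, ?_⟩
      · rwa [← integrable_indicator_iff measurableSet_Ioi]
      · have h2 := integral_posConvolution hI hφI (ContinuousLinearMap.mul ℝ ℝ)
        simp only [ContinuousLinearMap.mul_apply'] at h2
        calc (∫ x in Ioi (0:ℝ), conv φ (convPow φ k) x)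
            = ∫ x in Ioi (0:ℝ), ∫ t in (0:ℝ)..x, convPow φ k t * φ (x - t) := by
              refine setIntegral_congr_fun measurableSet_Ioi (fun x _ => conv_eq_swap _ _ _)
          _ = 1 := by rw [h2, hInt, phi_integral_Ioi hα hσ hφ]; norm_num
      · intro x hx
        unfold conv
        rw [intervalIntegral.integral_of_le (le_of_lt hx)]
        apply setIntegral_nonneg measurableSet_Ioc
        intro s hs
        exact mul_nonneg (phi_nonneg hα hσ hφ (by simp; linarith [hs.2])) (hNN s hs.1)

lemma tail_eq {t : ℝ} (ht : 0 ≤ t) (k : ℕ) :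
    ∫ s in Ioi t, convPow φ k s = 1 - ∫ s in Ioc (0:ℝ) t, convPow φ k s := by
  obtain ⟨hI, hInt, _⟩ := convPow_props hα hσ hφ k
  have hu := setIntegral_union (Set.Ioc_disjoint_Ioi le_rfl) measurableSet_Ioi
    (hI.mono_set Ioc_subset_Ioi_self) (hI.mono_set (Ioi_subset_Ioi ht))
    (f := convPow φ k)
  rw [Ioc_union_Ioi_eq_Ioi ht, hInt] at hu
  linarith

lemma Fk_bounds {t : ℝ} (ht : 0 ≤ t) (k : ℕ) :
    0 ≤ (∫ s in Ioc (0:ℝ) t, convPow φ k s) ∧ (∫ s in Ioc (0:ℝ) t, convPow φ k s) ≤ 1 := by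
  obtain ⟨hI, hInt, hNN⟩ := convPow_props hα hσ hφ k
  constructor
  · exact setIntegral_nonneg measurableSet_Ioc (fun s hs => hNN s hs.1)
  · have h2 : 0 ≤ ∫ s in Ioi t, convPow φ k s :=
      setIntegral_nonneg measurableSet_Ioi (fun s hs => hNN s (lt_of_le_of_lt ht hs))
    have := tail_eq hα hσ hφ ht k
    linarith

lemma fubini_step {t : ℝ} (ht : 0 ≤ t) (k : ℕ) :
    ∫ u in Ioc (0:ℝ) t, convPow φ (k+1) u
      = ∫ s in Ioc (0:ℝ) t, (∫ v in (0:ℝ)..(t-s), φ v) * convPow φ k s := by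
  obtain ⟨hI, _, _⟩ := convPow_props hα hσ hφ k
  set ψ0 : ℝ → ℝ := indicator (Ioi 0) φ with hψ0def
  set ψk : ℝ → ℝ := indicator (Ioi 0) (convPow φ k) with hψkdef
  have hψ0 : Integrable ψ0 volume :=
    (integrable_indicator_iff measurableSet_Ioi).2 (phi_integrableOn hα hσ hφ)
  have hψk : Integrable ψk volume := (integrable_indicator_iff measurableSet_Ioi).2 hI
  have hprod : Integrable (fun p : ℝ × ℝ => ψ0 (p.1 - p.2) * ψk p.2)
      (volume.prod volume) := by
    have h := hψk.convolution_integrand (ContinuousLinearMap.mul ℝ ℝ) hψ0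
    simp only [ContinuousLinearMap.mul_apply'] at h
    exact h.congr (Eventually.of_forall (fun p => mul_comm _ _))
  have hprodR : Integrable (fun p : ℝ × ℝ => ψ0 (p.1 - p.2) * ψk p.2)
      ((volume.restrict (Ioc (0:ℝ) t)).prod volume) := by
    have h := Measure.prod_restrict (μ := volume) (ν := volume) (Ioc (0:ℝ) t) (univ : Set ℝ)
    rw [Measure.restrict_univ] at h
    rw [h]
    exact hprod.integrableOn
  have swap := integral_integral_swap (μ := volume.restrict (Ioc (0:ℝ) t)) (ν := volume)
    (f := fun u s => ψ0 (u - s) * ψk s) hprodR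
  calc ∫ u in Ioc (0:ℝ) t, convPow φ (k+1) u
      = ∫ u in Ioc (0:ℝ) t, ∫ s : ℝ, ψ0 (u - s) * ψk s := by
        apply setIntegral_congr_fun measurableSet_Ioc
        intro u hu
        show convPow φ (k+1) u = ∫ s : ℝ, ψ0 (u - s) * ψk s
        rw [convPow_succ]
        unfold conv
        rw [intervalIntegral.integral_of_le hu.1.le, integral_Ioc_eq_integral_Ioo]
        have hv : ∀ s, s ∉ Ioo (0:ℝ) u → ψ0 (u - s) * ψk s = 0 := by
          intro s hs
          rcases le_or_gt s 0 with h | h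
          · rw [hψkdef]
            rw [indicator_of_notMem (by simpa using h) (convPow φ k), mul_zero]
          · have : u ≤ s := by
              by_contra hc
              exact hs ⟨h, lt_of_not_ge hc⟩
            rw [hψ0def]
            rw [indicator_of_notMem (by simp; linarith : ¬ u - s ∈ Ioi (0:ℝ)) φ, zero_mul]
        rw [show (∫ s : ℝ, ψ0 (u - s) * ψk s) = ∫ s in Ioo (0:ℝ) u, ψ0 (u - s) * ψk s
          from (setIntegral_eq_integral_of_forall_compl_eq_zero hv).symm]
        apply setIntegral_congr_fun measurableSet_Ioo
        intro s hs
        show φ (u - s) * convPow φ k s = ψ0 (u - s) * ψk s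
        rw [hψ0def, hψkdef,
            indicator_of_mem (by simp [hs.1] : s ∈ Ioi (0:ℝ)) (convPow φ k),
            indicator_of_mem (by simp [sub_pos.2 hs.2] : u - s ∈ Ioi (0:ℝ)) φ]
    _ = ∫ s : ℝ, ∫ u in Ioc (0:ℝ) t, ψ0 (u - s) * ψk s := swap
    _ = ∫ s : ℝ, indicator (Ioc (0:ℝ) t)
          (fun s => (∫ v in (0:ℝ)..(t-s), φ v) * convPow φ k s) s := by
        congr 1
        funext s
        rw [integral_mul_const]
        by_cases hs : s ∈ Ioc (0:ℝ) t
        · rw [indicator_of_mem hs, hψkdef,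
            indicator_of_mem (by simpa using hs.1 : s ∈ Ioi (0:ℝ))]
          congr 1
          have h1 : ∫ u in Ioc (0:ℝ) t, ψ0 (u - s) = ∫ u in (0:ℝ)..t, ψ0 (u - s) := by
            rw [intervalIntegral.integral_of_le ht]
          rw [h1, intervalIntegral.integral_comp_sub_right (fun u => ψ0 u) s, zero_sub,
            intervalIntegral.integral_of_le (by linarith [hs.1] : -s ≤ t - s),
            ← Ioc_union_Ioc_eq_Ioc (by linarith [hs.1] : -s ≤ (0:ℝ))
              (by linarith [hs.2] : (0:ℝ) ≤ t - s),
            setIntegral_union (Set.Ioc_disjoint_Ioc_of_le le_rfl) measurableSet_Ioc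
              hψ0.integrableOn hψ0.integrableOn]
          have h2 : ∫ u in Ioc (-s) (0:ℝ), ψ0 u = 0 := by
            rw [hψ0def, setIntegral_congr_fun measurableSet_Ioc
              (fun u hu => indicator_of_notMem (by simpa using hu.2) φ)]
            simp
          have h3 : ∫ u in Ioc (0:ℝ) (t-s), ψ0 u = ∫ v in (0:ℝ)..(t-s), φ v := by
            rw [intervalIntegral.integral_of_le (by linarith [hs.2] : (0:ℝ) ≤ t - s), hψ0def]
            exact setIntegral_congr_fun measurableSet_Ioc
              (fun u hu => indicator_of_mem (by simpa using hu.1) φ)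
          rw [h2, h3, zero_add]
        · rw [indicator_of_notMem hs]
          rcases le_or_gt s 0 with h | h
          · rw [hψkdef, indicator_of_notMem (by simpa using h), mul_zero]
          · have hts : t < s := by
              by_contra hc
              exact hs ⟨h, le_of_not_gt hc⟩
            have : ∫ u in Ioc (0:ℝ) t, ψ0 (u - s) = 0 := by
              rw [setIntegral_congr_fun measurableSet_Ioc
                (fun u hu => indicator_of_notMem
                  (by simp; linarith [hu.2] : u - s ∉ Ioi (0:ℝ)) φ)]
              simp
            rw [this, zero_mul]
    _ = ∫ s in Ioc (0:ℝ) t, (∫ v in (0:ℝ)..(t-s), φ v) * convPow φ k s := by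
        rw [integral_indicator measurableSet_Ioc]

lemma perk {Φbar : ℝ → ℝ} (hΦbar : ∀ x : ℝ, Φbar x = (1 + σ * x) ^ (-α))
    {t : ℝ} (ht : 0 ≤ t) (k : ℕ) :
    ∫ s in Ioc (0:ℝ) t, Φbar (t - s) * convPow φ k s
      = (∫ s in Ioc (0:ℝ) t, convPow φ k s) - ∫ s in Ioc (0:ℝ) t, convPow φ (k+1) s := by
  obtain ⟨hI, _, hNN⟩ := convPow_props hα hσ hφ k
  have hIk : IntegrableOn (convPow φ k) (Ioc (0:ℝ) t) := hI.mono_set Ioc_subset_Ioi_self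
  have hmeas : AEStronglyMeasurable (fun s => Φbar (t - s) * convPow φ k s)
      (volume.restrict (Ioc (0:ℝ) t)) := by
    have hm : Measurable fun s : ℝ => (1 + σ * (t - s)) ^ (-α) := by fun_prop
    have he : (fun s : ℝ => Φbar (t - s)) = fun s : ℝ => (1 + σ * (t - s)) ^ (-α) :=
      funext fun s => hΦbar _
    exact (he ▸ hm.aestronglyMeasurable).mul hIk.aestronglyMeasurable
  have hbd : ∀ᵐ s ∂(volume.restrict (Ioc (0:ℝ) t)),
      ‖Φbar (t - s) * convPow φ k s‖ ≤ convPow φ k s := by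
    rw [ae_restrict_iff' measurableSet_Ioc]
    refine Eventually.of_forall (fun s hs => ?_)
    have h1 : 0 ≤ convPow φ k s := hNN s hs.1
    have hb : (1:ℝ) ≤ 1 + σ * (t - s) := by nlinarith [hs.2]
    have h2 : 0 ≤ Φbar (t - s) := by
      rw [hΦbar]; exact rpow_nonneg (by linarith) _
    have h3 : Φbar (t - s) ≤ 1 := by
      rw [hΦbar]
      exact rpow_le_one_of_one_le_of_nonpos hb (by have := hα.1; linarith)
    rw [norm_mul, Real.norm_eq_abs, Real.norm_eq_abs, abs_of_nonneg h1, abs_of_nonneg h2]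
    nlinarith
  have hint : IntegrableOn (fun s => Φbar (t - s) * convPow φ k s) (Ioc (0:ℝ) t) :=
    Integrable.mono' hIk hmeas hbd
  have hGint : IntegrableOn (fun s => (∫ v in (0:ℝ)..(t-s), φ v) * convPow φ k s)
      (Ioc (0:ℝ) t) := by
    apply IntegrableOn.congr_fun (hIk.sub hint) ?_ measurableSet_Ioc
    intro s hs
    have hG : (∫ v in (0:ℝ)..(t-s), φ v) = 1 - Φbar (t - s) := by
      rw [phi_ftc hα hσ hφ (by linarith [hs.2] : (0:ℝ) ≤ t - s), hΦbar]
    simp only [hG, Pi.sub_apply]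
    ring
  have key := fubini_step hα hσ hφ ht k
  have hsplit : ∫ s in Ioc (0:ℝ) t, convPow φ k s
      = (∫ s in Ioc (0:ℝ) t, Φbar (t - s) * convPow φ k s)
        + ∫ s in Ioc (0:ℝ) t, (∫ v in (0:ℝ)..(t-s), φ v) * convPow φ k s := by
    rw [← integral_add hint hGint]
    apply setIntegral_congr_fun measurableSet_Ioc
    intro s hs
    have hG : (∫ v in (0:ℝ)..(t-s), φ v) = 1 - Φbar (t - s) := by
      rw [phi_ftc hα hσ hφ (by linarith [hs.2] : (0:ℝ) ≤ t - s), hΦbar]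
    simp only [hG]
    ring
  rw [← key] at hsplit
  linarith

end Conv

theorem tail_identity_for_resolvent
    (α σ ζ : ℝ) (hα : α ∈ Set.Ioo (1/2 : ℝ) 1) (hσ : 0 < σ) (hζ : ζ ∈ Set.Ioo (0:ℝ) 1)
    (φ : ℝ → ℝ) (hφ : ∀ t : ℝ, φ t = α * σ * (1 + σ * t) ^ (-(α + 1)))
    (Φbar : ℝ → ℝ) (hΦbar : ∀ t : ℝ, Φbar t = (1 + σ * t) ^ (-α))
    (R : ℝ → ℝ) (hR : ∀ t : ℝ, R t = ∑' k : ℕ, ζ ^ (k + 1) * convPow φ k t) :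
    ∀ t : ℝ, 0 ≤ t →
      Φbar t + conv Φbar R t = (1 - ζ) / ζ * ∫ s in Set.Ioi t, R s := by
  intro t ht
  obtain ⟨hζ0, hζ1⟩ := hζ
  set F : ℕ → ℝ := fun k => ∫ s in Ioc (0:ℝ) t, convPow φ k s with hFdef
  have hFnn : ∀ k, 0 ≤ F k := fun k => (Fk_bounds hα hσ hφ ht k).1
  have hFle : ∀ k, F k ≤ 1 := fun k => (Fk_bounds hα hσ hφ ht k).2
  have hgeom : Summable (fun k : ℕ => ζ ^ (k+1)) := by
    have h := (summable_geometric_of_lt_one hζ0.le hζ1).mul_left ζ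
    refine h.congr (fun k => ?_)
    rw [pow_succ, mul_comm]
  have hζpw : ∀ k : ℕ, (0:ℝ) ≤ ζ ^ (k+1) := fun k => pow_nonneg hζ0.le _
  have hSummF : Summable (fun k => ζ ^ (k+1) * F k) :=
    Summable.of_nonneg_of_le (fun k => mul_nonneg (hζpw k) (hFnn k))
      (fun k => mul_le_of_le_one_right (hζpw k) (hFle k)) hgeom
  have hSummF1 : Summable (fun k => ζ ^ (k+1) * F (k+1)) :=
    Summable.of_nonneg_of_le (fun k => mul_nonneg (hζpw k) (hFnn (k+1)))
      (fun k => mul_le_of_le_one_right (hζpw k) (hFle (k+1))) hgeom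
  have htsum_ne : (∑' k : ℕ, ENNReal.ofReal (ζ ^ (k+1))) ≠ ⊤ := by
    rw [← ENNReal.ofReal_tsum_of_nonneg hζpw hgeom]
    exact ENNReal.ofReal_ne_top
  -- Step A : tail integral of R
  have hIk : ∀ k, IntegrableOn (convPow φ k) (Ioi (0:ℝ)) :=
    fun k => (convPow_props hα hσ hφ k).1
  have hNNk : ∀ k, ∀ x ∈ Ioi (0:ℝ), 0 ≤ convPow φ k x :=
    fun k => (convPow_props hα hσ hφ k).2.2
  have hint_tail : ∀ k, IntegrableOn (convPow φ k) (Ioi t) :=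
    fun k => (hIk k).mono_set (Ioi_subset_Ioi ht)
  have hlinA : ∀ k : ℕ, (∫⁻ s in Ioi t, ‖ζ ^ (k+1) * convPow φ k s‖₊ ∂volume)
      ≤ ENNReal.ofReal (ζ ^ (k+1)) := by
    intro k
    have hik : IntegrableOn (fun s => ζ ^ (k+1) * convPow φ k s) (Ioi t) :=
      (hint_tail k).const_mul _
    have hnn : 0 ≤ᵐ[volume.restrict (Ioi t)] fun s => ζ ^ (k+1) * convPow φ k s := by
      refine (ae_restrict_mem measurableSet_Ioi).mono (fun s hs => ?_)
      simpa using mul_nonneg (hζpw k) (hNNk k s (lt_of_le_of_lt ht hs))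
    have heq := ofReal_integral_eq_lintegral_ofReal hik hnn
    calc (∫⁻ s in Ioi t, ‖ζ ^ (k+1) * convPow φ k s‖₊ ∂volume)
        = ∫⁻ s in Ioi t, ENNReal.ofReal (ζ ^ (k+1) * convPow φ k s) ∂volume := by
          apply lintegral_congr_ae
          filter_upwards [hnn] with s hs using Real.enorm_eq_ofReal hs
      _ = ENNReal.ofReal (∫ s in Ioi t, ζ ^ (k+1) * convPow φ k s) := heq.symm
      _ = ENNReal.ofReal (ζ ^ (k+1) * (1 - F k)) := by
          rw [integral_const_mul, tail_eq hα hσ hφ ht k]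
      _ ≤ ENNReal.ofReal (ζ ^ (k+1)) := by
          apply ENNReal.ofReal_le_ofReal
          have := hFnn k
          nlinarith [hζpw k]
  have hA : (∫ s in Ioi t, R s) = ∑' k : ℕ, ζ ^ (k+1) * (1 - F k) := by
    simp only [hR]
    rw [integral_tsum
      (fun k => ((hint_tail k).aestronglyMeasurable.const_mul _))
      (ne_top_of_le_ne_top htsum_ne (ENNReal.tsum_le_tsum hlinA))]
    refine tsum_congr (fun k => ?_)
    rw [integral_const_mul, tail_eq hα hσ hφ ht k]
  -- Step B : convolution term
  have hIkOc : ∀ k, IntegrableOn (convPow φ k) (Ioc (0:ℝ) t) :=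
    fun k => (hIk k).mono_set Ioc_subset_Ioi_self
  have hΦm : AEStronglyMeasurable (fun s : ℝ => Φbar (t - s)) (volume.restrict (Ioc (0:ℝ) t)) := by
    have hm : Measurable fun s : ℝ => (1 + σ * (t - s)) ^ (-α) := by fun_prop
    have he : (fun s : ℝ => Φbar (t - s)) = fun s : ℝ => (1 + σ * (t - s)) ^ (-α) :=
      funext fun s => hΦbar _
    exact he ▸ hm.aestronglyMeasurable
  have hΦbd : ∀ s ∈ Ioc (0:ℝ) t, 0 ≤ Φbar (t - s) ∧ Φbar (t - s) ≤ 1 := by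
    intro s hs
    have hb : (1:ℝ) ≤ 1 + σ * (t - s) := by nlinarith [hs.2]
    constructor
    · rw [hΦbar]; exact rpow_nonneg (by linarith) _
    · rw [hΦbar]
      exact rpow_le_one_of_one_le_of_nonpos hb (by have := hα.1; linarith)
  have hlinB : ∀ k : ℕ,
      (∫⁻ s in Ioc (0:ℝ) t, ‖Φbar (t - s) * (ζ ^ (k+1) * convPow φ k s)‖₊ ∂volume)
        ≤ ENNReal.ofReal (ζ ^ (k+1)) := by
    intro k
    have hik : IntegrableOn (fun s => ζ ^ (k+1) * convPow φ k s) (Ioc (0:ℝ) t) :=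
      (hIkOc k).const_mul _
    have hnn : 0 ≤ᵐ[volume.restrict (Ioc (0:ℝ) t)] fun s => ζ ^ (k+1) * convPow φ k s := by
      refine (ae_restrict_mem measurableSet_Ioc).mono (fun s hs => ?_)
      simpa using mul_nonneg (hζpw k) (hNNk k s hs.1)
    have heq := ofReal_integral_eq_lintegral_ofReal hik hnn
    calc (∫⁻ s in Ioc (0:ℝ) t, ‖Φbar (t - s) * (ζ ^ (k+1) * convPow φ k s)‖₊ ∂volume)
        ≤ ∫⁻ s in Ioc (0:ℝ) t, ENNReal.ofReal (ζ ^ (k+1) * convPow φ k s) ∂volume := by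
          apply lintegral_mono_ae
          rw [ae_restrict_iff' measurableSet_Ioc]
          refine Eventually.of_forall (fun s hs => ?_)
          rw [← enorm_eq_nnnorm, Real.enorm_eq_ofReal_abs]
          apply ENNReal.ofReal_le_ofReal
          obtain ⟨h0, h1⟩ := hΦbd s hs
          have hc := hNNk k s hs.1
          rw [abs_mul, abs_of_nonneg h0, abs_of_nonneg (mul_nonneg (hζpw k) hc)]
          nlinarith [mul_nonneg (hζpw k) hc]
      _ = ENNReal.ofReal (∫ s in Ioc (0:ℝ) t, ζ ^ (k+1) * convPow φ k s) := heq.symm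
      _ = ENNReal.ofReal (ζ ^ (k+1) * F k) := by rw [integral_const_mul]
      _ ≤ ENNReal.ofReal (ζ ^ (k+1)) := by
          apply ENNReal.ofReal_le_ofReal
          exact mul_le_of_le_one_right (hζpw k) (hFle k)
  have hB : conv Φbar R t = ∑' k : ℕ, ζ ^ (k+1) * (F k - F (k+1)) := by
    unfold conv
    rw [intervalIntegral.integral_of_le ht]
    simp only [hR, ← tsum_mul_left]
    rw [integral_tsum (f := fun (k : ℕ) (s : ℝ) => Φbar (t - s) * (ζ ^ (k+1) * convPow φ k s))
      (fun k => hΦm.mul ((hIkOc k).aestronglyMeasurable.const_mul _))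
      (ne_top_of_le_ne_top htsum_ne (ENNReal.tsum_le_tsum hlinB))]
    refine tsum_congr (fun k => ?_)
    have hrw : (fun s => Φbar (t - s) * (ζ ^ (k+1) * convPow φ k s))
        = fun s => ζ ^ (k+1) * (Φbar (t - s) * convPow φ k s) :=
      funext fun s => by ring
    rw [hrw, integral_const_mul, perk hα hσ hφ hΦbar ht k]
  -- Step C : algebra
  have hF0 : Φbar t = 1 - F 0 := by
    have : F 0 = ∫ s in (0:ℝ)..t, φ s := by
      rw [intervalIntegral.integral_of_le ht]; rfl
    rw [this, phi_ftc hα hσ hφ ht, hΦbar]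
    ring
  have hzeta : (∑' k : ℕ, ζ ^ (k+1)) = ζ * (1 - ζ)⁻¹ := by
    have h := tsum_geometric_of_lt_one hζ0.le hζ1
    calc (∑' k : ℕ, ζ ^ (k+1)) = ∑' k : ℕ, ζ * ζ ^ k := by
          refine tsum_congr (fun k => ?_); rw [pow_succ, mul_comm]
      _ = ζ * (1 - ζ)⁻¹ := by rw [tsum_mul_left, h]
  have hshift : ζ * (∑' k : ℕ, ζ ^ (k+1) * F (k+1))
      = (∑' k : ℕ, ζ ^ (k+1) * F k) - ζ ^ 1 * F 0 := by
    rw [← tsum_mul_left]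
    have h2 := Summable.tsum_eq_zero_add hSummF
    rw [h2]
    have : (fun k : ℕ => ζ * (ζ ^ (k+1) * F (k+1))) = fun k : ℕ => ζ ^ (k+1+1) * F (k+1) :=
      funext fun k => by ring
    rw [this]
    ring
  have hsub1 : (∑' k : ℕ, ζ ^ (k+1) * (F k - F (k+1)))
      = (∑' k : ℕ, ζ ^ (k+1) * F k) - ∑' k : ℕ, ζ ^ (k+1) * F (k+1) := by
    simp only [mul_sub]
    exact Summable.tsum_sub hSummF hSummF1
  have hsub2 : (∑' k : ℕ, ζ ^ (k+1) * (1 - F k))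
      = ζ * (1 - ζ)⁻¹ - ∑' k : ℕ, ζ ^ (k+1) * F k := by
    simp only [mul_sub, mul_one]
    rw [Summable.tsum_sub hgeom hSummF, hzeta]
  rw [hA, hB, hF0, hsub1, hsub2]
  set S := ∑' k : ℕ, ζ ^ (k+1) * F k
  set T := ∑' k : ℕ, ζ ^ (k+1) * F (k+1)
  have h1ζ : (1:ℝ) - ζ ≠ 0 := by linarith
  field_simp
  simp only [pow_one] at hshift
  nlinarith [hshift]
end
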